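/- arXiv:2006.08090 — 5 statements merged into one kernel-verified Lean document; each statement's English description precedes it below -/
import Mathlib

section
/- For every n ∈ ℕ one has ∑_{ε ∈ Λ^d} C_n^{(ε)} C_n^{(ε)} = I, where I denotes the identity operator on H. -/
/- Common setup: quantum Bernoulli noises on `ℋ = ℓ²(Γ)`, `Γ` = finite subsets of `ℕ`. -/

noncomputable section

open ContinuousLinearMap Filter

/-- The space `ℋ = ℓ²(Γ)` of square-integrable Bernoulli functionals,
where `Γ` is the set of finite subsets of `ℕ`. -/
abbrev ℋ : Type := lp (fun _ : Finset ℕ => ℂ) 2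

/-- The canonical orthonormal basis `{Z_σ : σ ∈ Γ}` of `ℋ`. -/
def Z (σ : Finset ℕ) : ℋ := lp.single 2 σ 1

/-- `QBN a` says that `a k` is the annihilation operator `∂_k` acting on Bernoulli
functionals: `∂_k Z_σ = 1_σ(k) Z_{σ\k}` and `∂_k* Z_σ = (1 - 1_σ(k)) Z_{σ∪k}`. -/
def QBN (a : ℕ → ℋ →L[ℂ] ℋ) : Prop :=
  (∀ (k : ℕ) (σ : Finset ℕ), a k (Z σ) = if k ∈ σ then Z (σ.erase k) else 0) ∧
  (∀ (k : ℕ) (σ : Finset ℕ), adjoint (a k) (Z σ) = if k ∈ σ then 0 else Z (insert k σ))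

/-- `L_n = (∂_n* + ∂_n - I)/2`. -/
def Lop (a : ℕ → ℋ →L[ℂ] ℋ) (n : ℕ) : ℋ →L[ℂ] ℋ := (2 : ℂ)⁻¹ • (adjoint (a n) + a n - 1)

/-- `R_n = (∂_n* + ∂_n + I)/2`. -/
def Rop (a : ℕ → ℋ →L[ℂ] ℋ) (n : ℕ) : ℋ →L[ℂ] ℋ := (2 : ℂ)⁻¹ • (adjoint (a n) + a n + 1)

/-- `Λ = {-1, 1} ⊆ ℤ`. -/
def Lam : Finset ℤ := {-1, 1}

/-- `Λ^d`, as a finite set of vectors in `ℤ^d`. -/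
def LamD (d : ℕ) : Finset (Fin d → ℤ) := Fintype.piFinset fun _ => Lam

/-- `B_n^{(ε)}`: equals `L_n` if `ε = -1` and `R_n` if `ε = +1`. -/
def Bop (a : ℕ → ℋ →L[ℂ] ℋ) (n : ℕ) (e : ℤ) : ℋ →L[ℂ] ℋ :=
  if e = -1 then Lop a n else Rop a n

/-- A characterization of the `d`-fold Hilbert-space tensor power of `Hs`:
`tpv` is the multilinear map `(u_1, …, u_d) ↦ u_1 ⊗ ⋯ ⊗ u_d`, which satisfies
`⟪⊗u_j, ⊗v_j⟫ = ∏ ⟪u_j, v_j⟫` and has dense span, and `tp` sends a `d`-tuple of bounded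
operators to their tensor product operator, i.e. `(⊗A_j)(⊗u_j) = ⊗(A_j u_j)`. -/
def IsTensorD {Hs : Type} [NormedAddCommGroup Hs] [InnerProductSpace ℂ Hs]
    {d : ℕ} {Hd : Type} [NormedAddCommGroup Hd] [InnerProductSpace ℂ Hd]
    (tpv : MultilinearMap ℂ (fun _ : Fin d => Hs) Hd)
    (tp : (Fin d → Hs →L[ℂ] Hs) → (Hd →L[ℂ] Hd)) : Prop :=
  (∀ u v : Fin d → Hs, (@inner ℂ _ _ (tpv u) (tpv v)) = ∏ j, (@inner ℂ _ _ (u j) (v j))) ∧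
  ((Submodule.span ℂ (Set.range fun u => tpv u)).topologicalClosure = ⊤) ∧
  (∀ (A : Fin d → Hs →L[ℂ] Hs) (u : Fin d → Hs), tp A (tpv u) = tpv fun j => A j (u j))

/-- Conjugation of an operator by a unitary isomorphism `K`: `T ↦ K T K⁻¹`. -/
def conjK {Hs Hd : Type} [NormedAddCommGroup Hs] [InnerProductSpace ℂ Hs]
    [NormedAddCommGroup Hd] [InnerProductSpace ℂ Hd]
    (K : Hd ≃ₗᵢ[ℂ] Hs) (T : Hd →L[ℂ] Hd) : Hs →L[ℂ] Hs :=
  K.toLinearIsometry.toContinuousLinearMap ∘L T ∘L K.symm.toLinearIsometry.toContinuousLinearMap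

/-- `C_n^{(ε)} = K (B_n^{(ε_1)} ⊗ ⋯ ⊗ B_n^{(ε_d)}) K⁻¹` for `ε ∈ Λ^d`. -/
def Cop {d : ℕ} {Hd : Type} [NormedAddCommGroup Hd] [InnerProductSpace ℂ Hd]
    (a : ℕ → ℋ →L[ℂ] ℋ) (tp : (Fin d → ℋ →L[ℂ] ℋ) → (Hd →L[ℂ] Hd))
    (K : Hd ≃ₗᵢ[ℂ] ℋ) (n : ℕ) (v : Fin d → ℤ) : ℋ →L[ℂ] ℋ :=
  conjK K (tp fun j => Bop a n (v j))

/-- The trace of an operator computed relative to an orthonormal basis `b`: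
`Tr T = ∑_i Re ⟪b i, T (b i)⟫` (for positive operators this is the genuine trace). -/
def trB {E : Type} [NormedAddCommGroup E] [InnerProductSpace ℂ E] {ι : Type}
    (b : ι → E) (T : E →L[ℂ] E) : ℝ :=
  ∑' i, (@inner ℂ _ _ (b i) (T (b i))).re

/-- Finiteness (summability) of the trace of `T` relative to the orthonormal basis `b`;
for a positive operator `T` this says exactly that `T` is of trace class. -/
def HasFiniteTrace {E : Type} [NormedAddCommGroup E] [InnerProductSpace ℂ E] {ι : Type}
    (b : ι → E) (T : E →L[ℂ] E) : Prop :=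
  Summable fun i => (@inner ℂ _ _ (b i) (T (b i))).re

/-- The trace on `ℋ`, computed in the canonical ONB `{Z_σ}`. -/
def trH : (ℋ →L[ℂ] ℋ) → ℝ := trB Z

/-- A nucleus with site space `X` on a Hilbert space with orthonormal basis `b`: a family of
positive trace-class operators `ω x` with `∑_x Tr[ω x] = 1`. -/
def IsNucleusOn {E : Type} [NormedAddCommGroup E] [InnerProductSpace ℂ E] [CompleteSpace E]
    {ι X : Type} (b : ι → E) (ω : X → E →L[ℂ] E) : Prop :=
  (∀ x, (ω x).IsPositive) ∧ (∀ x, HasFiniteTrace b (ω x)) ∧ HasSum (fun x => trB b (ω x)) 1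

/-- The one-dimensional map `𝔍_n`: `(𝔍_n ρ)(x) = L_n ρ(x+1) L_n + R_n ρ(x-1) R_n`. -/
def Jmap1 (a : ℕ → ℋ →L[ℂ] ℋ) (n : ℕ) (ρ : ℤ → ℋ →L[ℂ] ℋ) : ℤ → ℋ →L[ℂ] ℋ :=
  fun x => Lop a n * ρ (x + 1) * Lop a n + Rop a n * ρ (x - 1) * Rop a n

/-- The `d`-dimensional map `𝔍_n^{(d)}`:
`(𝔍_n^{(d)} ω)(x) = ∑_{ε ∈ Λ^d} C_n^{(ε)} ω(x-ε) C_n^{(ε)}`. -/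
def JmapD {d : ℕ} {Hd : Type} [NormedAddCommGroup Hd] [InnerProductSpace ℂ Hd]
    (a : ℕ → ℋ →L[ℂ] ℋ) (tp : (Fin d → ℋ →L[ℂ] ℋ) → (Hd →L[ℂ] Hd)) (K : Hd ≃ₗᵢ[ℂ] ℋ)
    (n : ℕ) (ω : (Fin d → ℤ) → ℋ →L[ℂ] ℋ) : (Fin d → ℤ) → ℋ →L[ℂ] ℋ :=
  fun x => ∑ v ∈ LamD d, Cop a tp K n v * ω (x - v) * Cop a tp K n v

/-- The sequence `ρ⁽⁰⁾ = ρ`, `ρ⁽ⁿ⁺¹⁾ = 𝔍_n ρ⁽ⁿ⁾` generated by `ρ` and `(𝔍_n)`. -/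
def seqJ (a : ℕ → ℋ →L[ℂ] ℋ) (ρ : ℤ → ℋ →L[ℂ] ℋ) : ℕ → ℤ → ℋ →L[ℂ] ℋ
  | 0 => ρ
  | n + 1 => Jmap1 a n (seqJ a ρ n)

/-- Regularity of a 1-dimensional nucleus `ρ`:
`lim_n ∑_x e^{itx/√n} Tr[ρ⁽ⁿ⁾(x)] = e^{-t²/2}` for every real `t`. -/
def Regular (a : ℕ → ℋ →L[ℂ] ℋ) (ρ : ℤ → ℋ →L[ℂ] ℋ) : Prop :=
  ∀ t : ℝ, Tendsto (fun n : ℕ => ∑' x : ℤ,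
      Complex.exp (Complex.I * (t : ℂ) * (x : ℂ) / (Real.sqrt n : ℂ)) * (trH (seqJ a ρ n x) : ℂ))
    atTop (nhds (Complex.exp (-(t : ℂ) ^ 2 / 2)))

/-- The rank-one (Dirac) operator `|u⟩⟨v| : w ↦ ⟪v, w⟫ u`. -/
def dyad {E : Type} [NormedAddCommGroup E] [InnerProductSpace ℂ E] (u v : E) : E →L[ℂ] E :=
  (toSpanSingleton ℂ u).comp (innerSL ℂ v)

/-- `ℓ²(ℤ^d)`. -/
abbrev l2Z (d : ℕ) : Type := lp (fun _ : Fin d → ℤ => ℂ) 2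

/-- The canonical orthonormal basis `{δ_x : x ∈ ℤ^d}` of `ℓ²(ℤ^d)`. -/
def deltaV {d : ℕ} (x : Fin d → ℤ) : l2Z d := lp.single 2 x 1

/-- A characterization of the Hilbert-space tensor product `E = ℓ²(ℤ^d) ⊗ Hs`:
`tv` is the bilinear map `(f, u) ↦ f ⊗ u`, with `⟪f⊗u, g⊗v⟫ = ⟪f,g⟫⟪u,v⟫` and dense span,
and `top2` sends a pair of bounded operators to their tensor product operator:
`(A ⊗ B)(f ⊗ u) = (A f) ⊗ (B u)`. -/
def IsTensor2 {d : ℕ} {Hs E : Type} [NormedAddCommGroup Hs] [InnerProductSpace ℂ Hs]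
    [NormedAddCommGroup E] [InnerProductSpace ℂ E]
    (tv : l2Z d →ₗ[ℂ] Hs →ₗ[ℂ] E)
    (top2 : (l2Z d →L[ℂ] l2Z d) → (Hs →L[ℂ] Hs) → (E →L[ℂ] E)) : Prop :=
  (∀ (f g : l2Z d) (u v : Hs),
      (@inner ℂ _ _ (tv f u) (tv g v)) = (@inner ℂ _ _ f g) * (@inner ℂ _ _ u v)) ∧
  ((Submodule.span ℂ {z : E | ∃ f u, z = tv f u}).topologicalClosure = ⊤) ∧
  (∀ (A : l2Z d →L[ℂ] l2Z d) (B : Hs →L[ℂ] Hs) (f : l2Z d) (u : Hs),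
      top2 A B (tv f u) = tv (A f) (B u))

/-- The orthonormal basis `{δ_x ⊗ b_κ}` of the tensor product `ℓ²(ℤ^d) ⊗ Hs` induced by the
canonical basis of `ℓ²(ℤ^d)` and an orthonormal basis `b` of `Hs`. -/
def tbasis {d : ℕ} {Hs E : Type} [NormedAddCommGroup Hs] [InnerProductSpace ℂ Hs]
    [NormedAddCommGroup E] [InnerProductSpace ℂ E]
    (tv : l2Z d →ₗ[ℂ] Hs →ₗ[ℂ] E) {κ : Type} (b : κ → Hs) : (Fin d → ℤ) × κ → E :=
  fun p => tv (deltaV p.1) (b p.2)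

/-- The Kraus operators `M^{(n)}_{x,y} = |δ_x⟩⟨δ_y| ⊗ C_n^{(x-y)}` if `x - y ∈ Λ^d`, else `0`. -/
def Mop {d : ℕ} {Hd E : Type} [NormedAddCommGroup Hd] [InnerProductSpace ℂ Hd]
    [NormedAddCommGroup E] [InnerProductSpace ℂ E]
    (a : ℕ → ℋ →L[ℂ] ℋ) (tp : (Fin d → ℋ →L[ℂ] ℋ) → (Hd →L[ℂ] Hd)) (K : Hd ≃ₗᵢ[ℂ] ℋ)
    (top2 : (l2Z d →L[ℂ] l2Z d) → (ℋ →L[ℂ] ℋ) → (E →L[ℂ] E))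
    (n : ℕ) (x y : Fin d → ℤ) : E →L[ℂ] E :=
  if x - y ∈ LamD d then top2 (dyad (deltaV x) (deltaV y)) (Cop a tp K n (x - y)) else 0

/-- The 1-dimensional nucleus `ρ_σ` concentrated at `0` with value `|Z_σ⟩⟨Z_σ|`. -/
def rhoPoint (σ : Finset ℕ) : ℤ → ℋ →L[ℂ] ℋ := fun x => if x = 0 then dyad (Z σ) (Z σ) else 0

/-- `ℓ²(ℤ^d; ℋ)`, the space of square-summable `ℋ`-valued functions on `ℤ^d`. -/
abbrev l2ZH (d : ℕ) : Type := lp (fun _ : Fin d → ℤ => ℋ) 2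
lemma Zcoord_zero (g : ℋ) (h : ∀ σ, (inner ℂ (Z σ) g : ℂ) = 0) : g = 0 := by
  apply lp.ext
  funext σ
  have h2 := h σ
  rw [Z, lp.inner_single_left] at h2
  simpa using h2

lemma Tsq (a : ℕ → ℋ →L[ℂ] ℋ) (ha : QBN a) (n : ℕ) :
    (adjoint (a n) + a n) * (adjoint (a n) + a n) = 1 := by
  set T := adjoint (a n) + a n with hTdef
  have hTZ : ∀ σ, T (Z σ) = if n ∈ σ then Z (σ.erase n) else Z (insert n σ) := by
    intro σ
    simp only [hTdef, ContinuousLinearMap.add_apply, ha.1 n σ, ha.2 n σ]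
    split_ifs with h <;> simp
  have hT2Z : ∀ σ, (T * T) (Z σ) = Z σ := by
    intro σ
    rw [ContinuousLinearMap.mul_apply, hTZ]
    by_cases h : n ∈ σ
    · rw [if_pos h, hTZ, if_neg (Finset.notMem_erase n σ), Finset.insert_erase h]
    · rw [if_neg h, hTZ, if_pos (Finset.mem_insert_self n σ), Finset.erase_insert h]
  have hsa : adjoint (T * T) = T * T := by
    have hT : adjoint T = T := by
      rw [hTdef, map_add, adjoint_adjoint, add_comm]
    rw [show T * T = T ∘L T from rfl, adjoint_comp, hT]
  refine ContinuousLinearMap.ext fun f => ?_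
  rw [ContinuousLinearMap.one_apply]
  have h0 : (T * T) f - f = 0 := by
    apply Zcoord_zero
    intro σ
    rw [inner_sub_right, sub_eq_zero]
    calc (inner ℂ (Z σ) ((T * T) f) : ℂ) = inner ℂ (adjoint (T * T) (Z σ)) f := by
          rw [adjoint_inner_left]
      _ = inner ℂ (Z σ) f := by rw [hsa, hT2Z]
  exact sub_eq_zero.mp h0

lemma LRsq (a : ℕ → ℋ →L[ℂ] ℋ) (ha : QBN a) (n : ℕ) :
    Lop a n * Lop a n + Rop a n * Rop a n = 1 := by
  have hT := Tsq a ha n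
  set T := adjoint (a n) + a n with hTdef
  have e : (T - 1) * (T - 1) + (T + 1) * (T + 1) = T * T + T * T + 2 := by
    noncomm_ring
    simp [nsmul_eq_mul]
  have e4 : (T - 1) * (T - 1) + (T + 1) * (T + 1) = (4 : ℂ) • (1 : ℋ →L[ℂ] ℋ) := by
    rw [e, hT, Algebra.smul_def, map_ofNat, mul_one]
    norm_num
  rw [Lop, Rop, ← hTdef, smul_mul_assoc, smul_mul_assoc, mul_smul_comm, mul_smul_comm,
    smul_smul, smul_smul, ← smul_add, e4, smul_smul]
  norm_num

/-- For every `n`, `∑_{ε ∈ Λ^d} C_n^{(ε)} C_n^{(ε)} = I`. -/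
theorem stmt4 (a : ℕ → ℋ →L[ℂ] ℋ) (ha : QBN a)
    (d : ℕ) (hd : 2 ≤ d)
    (Hd : Type) [NormedAddCommGroup Hd] [InnerProductSpace ℂ Hd] [CompleteSpace Hd]
    (tpv : MultilinearMap ℂ (fun _ : Fin d => ℋ) Hd)
    (tp : (Fin d → ℋ →L[ℂ] ℋ) → (Hd →L[ℂ] Hd))
    (htp : IsTensorD tpv tp)
    (K : Hd ≃ₗᵢ[ℂ] ℋ) (n : ℕ) :
    ∑ v ∈ LamD d, Cop a tp K n v * Cop a tp K n v = 1 := by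
  obtain ⟨hip, hdense, htp3⟩ := htp
  have key : ∑ v ∈ LamD d, tp (fun j => Bop a n (v j)) * tp (fun j => Bop a n (v j)) = 1 := by
    have hdense' : Dense ((Submodule.span ℂ (Set.range fun u => tpv u)) : Set Hd) := by
      rw [← Submodule.dense_iff_topologicalClosure_eq_top] at hdense
      exact hdense
    refine ContinuousLinearMap.ext_on hdense' ?_
    rintro _ ⟨u, rfl⟩
    simp only [ContinuousLinearMap.sum_apply, ContinuousLinearMap.mul_apply, htp3,
      ContinuousLinearMap.one_apply]
    have hms := (tpv.map_sum_finset (A := fun _ => Lam)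
      (g := fun j e => Bop a n e (Bop a n e (u j)))).symm
    rw [show LamD d = Fintype.piFinset fun _ : Fin d => Lam from rfl, hms]
    congr 1
    funext j
    have hsum : ∑ e ∈ Lam, Bop a n e (Bop a n e (u j))
        = (Lop a n * Lop a n + Rop a n * Rop a n) (u j) := by
      rw [show Lam = ({-1, 1} : Finset ℤ) from rfl,
        Finset.sum_pair (by decide : (-1 : ℤ) ≠ 1)]
      simp [Bop, ContinuousLinearMap.add_apply, ContinuousLinearMap.mul_apply]
    rw [hsum, LRsq a ha n, ContinuousLinearMap.one_apply]
  have hK : ∀ A B : Hd →L[ℂ] Hd, conjK K A * conjK K B = conjK K (A * B) := by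
    intro A B
    ext x
    simp [conjK, ContinuousLinearMap.mul_apply]
  have hKsum : ∑ v ∈ LamD d,
      conjK K (tp (fun j => Bop a n (v j)) * tp (fun j => Bop a n (v j)))
      = conjK K (∑ v ∈ LamD d, tp (fun j => Bop a n (v j)) * tp (fun j => Bop a n (v j))) := by
    ext x
    simp [conjK, ContinuousLinearMap.sum_apply, map_sum]
  simp only [Cop, hK]
  rw [hKsum, key]
  ext x
  simp [conjK]
end
end

section
/- For every n ∈ ℕ and every d-dimensional nucleus ω on H, the map ω′ : ℤ^d → bounded operators on H defined by ω′(x) = ∑_{ε ∈ Λ^d} C_n^{(ε)} ω(x − ε) C_n^{(ε)} is again a d-dimensional nucleus on H; that is, each ω′(x) is a positive trace-class operator and ∑_{x ∈ ℤ^d} Tr[ω′(x)] = 1. (This defines the mapping 𝔍_n^{(d)} on the set of d-dimensional nucleuses.) -/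
/- Common setup: quantum Bernoulli noises on `ℋ = ℓ²(Γ)`, `Γ` = finite subsets of `ℕ`. -/

noncomputable section

open ContinuousLinearMap Filter

/-! ### Auxiliary lemmas -/

instance instCFCℋ : ContinuousFunctionalCalculus ℝ (ℋ →L[ℂ] ℋ) IsSelfAdjoint :=
  IsSelfAdjoint.instContinuousFunctionalCalculus

instance instNUCFCℋ : NonUnitalContinuousFunctionalCalculus ℝ (ℋ →L[ℂ] ℋ) IsSelfAdjoint :=
  IsSelfAdjoint.instNonUnitalContinuousFunctionalCalculus

set_option maxHeartbeats 1000000 in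
set_option synthInstance.maxHeartbeats 400000 in
lemma sqrtAux (T : ℋ →L[ℂ] ℋ) (h : 0 ≤ T) :
    CFC.sqrt T * CFC.sqrt T = T ∧ IsSelfAdjoint (CFC.sqrt T) :=
  ⟨CFC.sqrt_mul_sqrt_self T h, IsSelfAdjoint.of_nonneg (CFC.sqrt_nonneg T)⟩

/-- The canonical Hilbert basis of `ℋ`. -/
def bZ : HilbertBasis (Finset ℕ) ℂ ℋ := ⟨LinearIsometryEquiv.refl ℂ ℋ⟩

lemma bZ_eq (σ : Finset ℕ) : bZ σ = Z σ := by
  rw [← HilbertBasis.repr_symm_single bZ]; rfl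

lemma extZ {T S : ℋ →L[ℂ] ℋ} (h : ∀ σ, T (Z σ) = S (Z σ)) : T = S := by
  refine ContinuousLinearMap.ext_on (Submodule.dense_iff_topologicalClosure_eq_top.mpr bZ.dense_span) ?_
  rintro x ⟨σ, rfl⟩
  rw [bZ_eq]; exact h σ

lemma Sn_apply {a : ℕ → ℋ →L[ℂ] ℋ} (ha : QBN a) (n : ℕ) (σ : Finset ℕ) :
    (adjoint (a n) + a n) (Z σ) = if n ∈ σ then Z (σ.erase n) else Z (insert n σ) := by
  rw [ContinuousLinearMap.add_apply, ha.1 n σ, ha.2 n σ]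
  split <;> simp

lemma Sn_sq {a : ℕ → ℋ →L[ℂ] ℋ} (ha : QBN a) (n : ℕ) :
    (adjoint (a n) + a n) * (adjoint (a n) + a n) = 1 := by
  apply extZ; intro σ
  rw [ContinuousLinearMap.mul_apply, ContinuousLinearMap.one_apply, Sn_apply ha]
  by_cases h : n ∈ σ
  · rw [if_pos h, Sn_apply ha, if_neg (Finset.notMem_erase n σ), Finset.insert_erase h]
  · rw [if_neg h, Sn_apply ha, if_pos (Finset.mem_insert_self n σ), Finset.erase_insert h]

lemma LR_sq {a : ℕ → ℋ →L[ℂ] ℋ} (ha : QBN a) (n : ℕ) :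
    Lop a n * Lop a n + Rop a n * Rop a n = 1 := by
  have h := Sn_sq ha n
  unfold Lop Rop
  set S := adjoint (a n) + a n with hS
  rw [smul_mul_assoc, mul_smul_comm, smul_smul, smul_mul_assoc, mul_smul_comm, smul_smul,
    ← smul_add]
  have h2 : (S - 1) * (S - 1) + (S + 1) * (S + 1) = S * S + S * S + (1 + 1) := by
    noncomm_ring
  rw [h2, h]
  have h3 : ((1 : ℋ →L[ℂ] ℋ) + 1) + (1 + 1) = (4 : ℂ) • 1 := by
    rw [show (4 : ℂ) = 2 + 2 by norm_num, add_smul, two_smul]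
  rw [h3, smul_smul]
  norm_num

lemma Sn_sa {a : ℕ → ℋ →L[ℂ] ℋ} (n : ℕ) : IsSelfAdjoint (adjoint (a n) + a n) := by
  simp only [IsSelfAdjoint, star_add, star_eq_adjoint, adjoint_adjoint]
  exact add_comm _ _

lemma half_star : star ((2 : ℂ)⁻¹) = (2 : ℂ)⁻¹ := by
  simp

lemma Lop_sa {a : ℕ → ℋ →L[ℂ] ℋ} (n : ℕ) : IsSelfAdjoint (Lop a n) := by
  unfold Lop
  rw [IsSelfAdjoint, star_smul, half_star, star_sub, star_one, (Sn_sa n).star_eq]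

lemma Rop_sa {a : ℕ → ℋ →L[ℂ] ℋ} (n : ℕ) : IsSelfAdjoint (Rop a n) := by
  unfold Rop
  rw [IsSelfAdjoint, star_smul, half_star, star_add, star_one, (Sn_sa n).star_eq]

lemma Bop_sa {a : ℕ → ℋ →L[ℂ] ℋ} (n : ℕ) (e : ℤ) : IsSelfAdjoint (Bop a n e) := by
  unfold Bop; split
  · exact Lop_sa n
  · exact Rop_sa n

section Tensor

variable {d : ℕ} {Hd : Type} [NormedAddCommGroup Hd] [InnerProductSpace ℂ Hd] [CompleteSpace Hd]
  {tpv : MultilinearMap ℂ (fun _ : Fin d => ℋ) Hd} {tp : (Fin d → ℋ →L[ℂ] ℋ) → (Hd →L[ℂ] Hd)}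

lemma ext_tpv (htp : IsTensorD tpv tp) {T S : Hd →L[ℂ] Hd}
    (h : ∀ u, T (tpv u) = S (tpv u)) : T = S := by
  refine ContinuousLinearMap.ext_on (s := Set.range fun u => tpv u) ?_ ?_
  · rw [Submodule.dense_iff_topologicalClosure_eq_top]; exact htp.2.1
  · rintro x ⟨u, rfl⟩; exact h u

lemma orth_tpv (htp : IsTensorD tpv tp) {w : Hd}
    (h : ∀ u, (inner ℂ w (tpv u) : ℂ) = 0) : w = 0 := by
  have h0 : innerSL ℂ w = 0 := by
    refine ContinuousLinearMap.ext_on (s := Set.range fun u => tpv u) ?_ ?_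
    · rw [Submodule.dense_iff_topologicalClosure_eq_top]; exact htp.2.1
    · rintro x ⟨u, rfl⟩; simpa using h u
  have h2 : (inner ℂ w w : ℂ) = 0 := by
    have := ContinuousLinearMap.ext_iff.mp h0 w
    simpa using this
  exact inner_self_eq_zero.mp h2

lemma adjoint_tp (htp : IsTensorD tpv tp) (A : Fin d → ℋ →L[ℂ] ℋ) :
    adjoint (tp A) = tp (fun j => adjoint (A j)) := by
  apply ext_tpv htp; intro u
  rw [← sub_eq_zero]
  apply orth_tpv htp
  intro v
  rw [← inner_conj_symm, inner_sub_right, adjoint_inner_right, htp.2.2, htp.2.2, htp.1, htp.1]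
  rw [sub_eq_zero.mpr, map_zero]
  exact Finset.prod_congr rfl fun j _ => (adjoint_inner_right (A j) (v j) (u j)).symm

lemma tp_mul (htp : IsTensorD tpv tp) (A B : Fin d → ℋ →L[ℂ] ℋ) :
    tp A * tp B = tp (fun j => A j * B j) := by
  apply ext_tpv htp; intro u
  rw [ContinuousLinearMap.mul_apply, htp.2.2, htp.2.2, htp.2.2]
  rfl

lemma sum_tp {a : ℕ → ℋ →L[ℂ] ℋ} (htp : IsTensorD tpv tp) (ha : QBN a) (n : ℕ) :
    ∑ v ∈ LamD d, tp (fun j => Bop a n (v j)) * tp (fun j => Bop a n (v j)) = 1 := by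
  apply ext_tpv htp; intro u
  rw [ContinuousLinearMap.sum_apply, ContinuousLinearMap.one_apply]
  have step : ∀ v ∈ LamD d, (tp (fun j => Bop a n (v j)) * tp (fun j => Bop a n (v j))) (tpv u)
      = tpv (fun j => Bop a n (v j) (Bop a n (v j) (u j))) := by
    intro v _
    rw [ContinuousLinearMap.mul_apply, htp.2.2, htp.2.2]
  rw [Finset.sum_congr rfl step]
  rw [show (LamD d) = Fintype.piFinset (fun _ : Fin d => Lam) from rfl]
  rw [← MultilinearMap.map_sum_finset tpv (fun j e => Bop a n e (Bop a n e (u j)))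
    (fun _ => Lam)]
  have inner_sum : ∀ x : ℋ, ∑ e ∈ Lam, Bop a n e (Bop a n e x) = x := by
    intro x
    rw [show (Lam : Finset ℤ) = {-1, 1} from rfl]
    rw [Finset.sum_pair (by decide : (-1 : ℤ) ≠ 1)]
    rw [show Bop a n (-1) = Lop a n from if_pos rfl,
      show Bop a n 1 = Rop a n from if_neg (by decide)]
    have := congrArg (fun T : ℋ →L[ℂ] ℋ => T x) (LR_sq ha n)
    simpa [ContinuousLinearMap.mul_apply] using this
  congr 1
  funext j
  exact inner_sum (u j)

end Tensor

section ConjK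

variable {Hd : Type} [NormedAddCommGroup Hd] [InnerProductSpace ℂ Hd] [CompleteSpace Hd]
  (K : Hd ≃ₗᵢ[ℂ] ℋ)

lemma conjK_mul (T S : Hd →L[ℂ] Hd) : conjK K T * conjK K S = conjK K (T * S) := by
  ext x
  simp [conjK, ContinuousLinearMap.mul_apply]

lemma conjK_one : conjK K (1 : Hd →L[ℂ] Hd) = 1 := by
  ext x
  simp [conjK]

lemma conjK_sum {ι : Type*} (s : Finset ι) (f : ι → Hd →L[ℂ] Hd) :
    ∑ v ∈ s, conjK K (f v) = conjK K (∑ v ∈ s, f v) := by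
  ext x
  simp [conjK, ContinuousLinearMap.sum_apply, map_sum]

lemma adjoint_conjK (T : Hd →L[ℂ] Hd) : adjoint (conjK K T) = conjK K (adjoint T) := by
  refine (((eq_adjoint_iff _ _).mpr ?_).symm : adjoint (conjK K T) = conjK K (adjoint T))
  intro x y
  simp only [conjK, ContinuousLinearMap.coe_comp', Function.comp_apply,
    LinearIsometry.coe_toContinuousLinearMap, LinearIsometryEquiv.coe_toLinearIsometry]
  calc (inner ℂ (K (adjoint T (K.symm x))) y : ℂ)
      = inner ℂ (K (adjoint T (K.symm x))) (K (K.symm y)) := by rw [K.apply_symm_apply]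
    _ = inner ℂ (adjoint T (K.symm x)) (K.symm y) := K.inner_map_map _ _
    _ = inner ℂ (K.symm x) (T (K.symm y)) := adjoint_inner_left T _ _
    _ = inner ℂ (K (K.symm x)) (K (T (K.symm y))) := (K.inner_map_map _ _).symm
    _ = inner ℂ x (K (T (K.symm y))) := by rw [K.apply_symm_apply]

end ConjK

section CopLemmas

variable {d : ℕ} {Hd : Type} [NormedAddCommGroup Hd] [InnerProductSpace ℂ Hd] [CompleteSpace Hd]
  {tpv : MultilinearMap ℂ (fun _ : Fin d => ℋ) Hd} {tp : (Fin d → ℋ →L[ℂ] ℋ) → (Hd →L[ℂ] Hd)}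
  {a : ℕ → ℋ →L[ℂ] ℋ} (K : Hd ≃ₗᵢ[ℂ] ℋ)

lemma Cop_sa (htp : IsTensorD tpv tp) (n : ℕ) (v : Fin d → ℤ) :
    IsSelfAdjoint (Cop a tp K n v) := by
  rw [IsSelfAdjoint, star_eq_adjoint, Cop, adjoint_conjK, adjoint_tp htp]
  have hfe : (fun j => adjoint (Bop a n (v j))) = fun j => Bop a n (v j) :=
    funext fun j => (Bop_sa n (v j)).adjoint_eq
  rw [hfe]

lemma sum_Cop (htp : IsTensorD tpv tp) (ha : QBN a) (n : ℕ) :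
    ∑ v ∈ LamD d, Cop a tp K n v * Cop a tp K n v = 1 := by
  simp only [Cop, conjK_mul]
  rw [conjK_sum]
  have : ∑ v ∈ LamD d, (tp fun j => Bop a n (v j)) * (tp fun j => Bop a n (v j)) = 1 :=
    sum_tp htp ha n
  rw [this, conjK_one]

end CopLemmas

section Trace

set_option maxHeartbeats 2000000
set_option synthInstance.maxHeartbeats 1000000

open ENNReal

/-- The `ℝ≥0∞`-valued trace relative to the basis `Z`. -/
def trE (T : ℋ →L[ℂ] ℋ) : ℝ≥0∞ := ∑' σ, ENNReal.ofReal (inner ℂ (Z σ) (T (Z σ)) : ℂ).re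

lemma parseval (x : ℋ) : HasSum (fun σ => ‖(inner ℂ (Z σ) x : ℂ)‖ ^ 2) (‖x‖ ^ 2) := by
  have h := bZ.hasSum_inner_mul_inner x x
  have h2 := Complex.hasSum_re h
  simp only [bZ_eq] at h2
  have he : ∀ σ, ((inner ℂ x (Z σ) : ℂ) * (inner ℂ (Z σ) x : ℂ)).re
      = ‖(inner ℂ (Z σ) x : ℂ)‖ ^ 2 := by
    intro σ
    rw [← inner_conj_symm, RCLike.conj_mul]
    norm_cast
  have hx : (inner ℂ x x : ℂ).re = ‖x‖ ^ 2 := by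
    have := inner_self_eq_norm_sq (𝕜 := ℂ) x
    simpa using this
  rw [← hx]
  exact h2.congr_fun fun σ => (he σ).symm

lemma parseval_ennreal (x : ℋ) :
    ∑' σ, ENNReal.ofReal (‖(inner ℂ (Z σ) x : ℂ)‖ ^ 2) = ENNReal.ofReal (‖x‖ ^ 2) := by
  rw [← ENNReal.ofReal_tsum_of_nonneg (fun σ => sq_nonneg _) (parseval x).summable,
    (parseval x).tsum_eq]

lemma hs_symm (A : ℋ →L[ℂ] ℋ) :
    ∑' σ, ENNReal.ofReal (‖A (Z σ)‖ ^ 2) = ∑' τ, ENNReal.ofReal (‖adjoint A (Z τ)‖ ^ 2) := by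
  have key : ∀ σ τ, ‖(inner ℂ (Z τ) (A (Z σ)) : ℂ)‖ = ‖(inner ℂ (Z σ) (adjoint A (Z τ)) : ℂ)‖ := by
    intro σ τ
    rw [← adjoint_inner_left]
    exact norm_inner_symm _ _
  calc ∑' σ, ENNReal.ofReal (‖A (Z σ)‖ ^ 2)
      = ∑' σ, ∑' τ, ENNReal.ofReal (‖(inner ℂ (Z τ) (A (Z σ)) : ℂ)‖ ^ 2) := by
        exact tsum_congr fun σ => (parseval_ennreal (A (Z σ))).symm
    _ = ∑' τ, ∑' σ, ENNReal.ofReal (‖(inner ℂ (Z τ) (A (Z σ)) : ℂ)‖ ^ 2) := ENNReal.tsum_comm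
    _ = ∑' τ, ∑' σ, ENNReal.ofReal (‖(inner ℂ (Z σ) (adjoint A (Z τ)) : ℂ)‖ ^ 2) := by
        exact tsum_congr fun τ => tsum_congr fun σ => by rw [key σ τ]
    _ = ∑' τ, ENNReal.ofReal (‖adjoint A (Z τ)‖ ^ 2) :=
        tsum_congr fun τ => parseval_ennreal (adjoint A (Z τ))

lemma re_inner_self (w : ℋ) : (inner ℂ w w : ℂ).re = ‖w‖ ^ 2 := by
  have := inner_self_eq_norm_sq (𝕜 := ℂ) w
  simpa using this

lemma trE_conj {T C : ℋ →L[ℂ] ℋ} (hT : T.IsPositive) (hC : IsSelfAdjoint C) :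
    trE (C * T * C) = ∑' τ, ENNReal.ofReal (‖C (CFC.sqrt T (Z τ))‖ ^ 2) := by
  obtain ⟨hmul, hsa⟩ := sqrtAux T ((ContinuousLinearMap.nonneg_iff_isPositive T).mpr hT)
  set S := CFC.sqrt T with hSdef
  have step1 : ∀ σ, (inner ℂ (Z σ) ((C * T * C) (Z σ)) : ℂ).re = ‖(S * C) (Z σ)‖ ^ 2 := by
    intro σ
    have e1 : (inner ℂ (Z σ) ((C * T * C) (Z σ)) : ℂ)
        = inner ℂ (S (C (Z σ))) (S (C (Z σ))) := by
      calc (inner ℂ (Z σ) ((C * T * C) (Z σ)) : ℂ)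
          = inner ℂ (adjoint C (Z σ)) (T (C (Z σ))) := (adjoint_inner_left C _ _).symm
        _ = inner ℂ (C (Z σ)) (S (S (C (Z σ)))) := by rw [hC.adjoint_eq, ← hmul]; rfl
        _ = inner ℂ (adjoint S (C (Z σ))) (S (C (Z σ))) := (adjoint_inner_left S _ _).symm
        _ = inner ℂ (S (C (Z σ))) (S (C (Z σ))) := by rw [hsa.adjoint_eq]
    rw [e1, re_inner_self]
    rfl
  have hadj : adjoint (S * C) = C * S := by
    rw [← star_eq_adjoint, star_mul, star_eq_adjoint, star_eq_adjoint,
      hC.adjoint_eq, hsa.adjoint_eq]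
  calc trE (C * T * C) = ∑' σ, ENNReal.ofReal (‖(S * C) (Z σ)‖ ^ 2) :=
        tsum_congr fun σ => by rw [step1]
    _ = ∑' τ, ENNReal.ofReal (‖adjoint (S * C) (Z τ)‖ ^ 2) := hs_symm _
    _ = ∑' τ, ENNReal.ofReal (‖C (S (Z τ))‖ ^ 2) := by
        rw [hadj]; rfl

lemma trE_pos_eq {T : ℋ →L[ℂ] ℋ} (hT : T.IsPositive) :
    trE T = ∑' τ, ENNReal.ofReal (‖CFC.sqrt T (Z τ)‖ ^ 2) := by
  obtain ⟨hmul, hsa⟩ := sqrtAux T ((ContinuousLinearMap.nonneg_iff_isPositive T).mpr hT)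
  refine tsum_congr fun τ => ?_
  congr 1
  have e1 : (inner ℂ (Z τ) (T (Z τ)) : ℂ) = inner ℂ (CFC.sqrt T (Z τ)) (CFC.sqrt T (Z τ)) := by
    calc (inner ℂ (Z τ) (T (Z τ)) : ℂ)
        = inner ℂ (Z τ) (CFC.sqrt T (CFC.sqrt T (Z τ))) := by
          conv_lhs => rw [← hmul]
          rfl
      _ = inner ℂ (adjoint (CFC.sqrt T) (Z τ)) (CFC.sqrt T (Z τ)) :=
          (adjoint_inner_left (CFC.sqrt T) _ _).symm
      _ = inner ℂ (CFC.sqrt T (Z τ)) (CFC.sqrt T (Z τ)) := by rw [hsa.adjoint_eq]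
  rw [e1, re_inner_self]

end Trace

section Main

set_option maxHeartbeats 2000000
set_option synthInstance.maxHeartbeats 1000000

open ENNReal

variable {d : ℕ} {Hd : Type} [NormedAddCommGroup Hd] [InnerProductSpace ℂ Hd] [CompleteSpace Hd]
  {tpv : MultilinearMap ℂ (fun _ : Fin d => ℋ) Hd} {tp : (Fin d → ℋ →L[ℂ] ℋ) → (Hd →L[ℂ] Hd)}
  {a : ℕ → ℋ →L[ℂ] ℋ} (K : Hd ≃ₗᵢ[ℂ] ℋ)

lemma norm_sq_conj (C : ℋ →L[ℂ] ℋ) (hC : IsSelfAdjoint C) (w : ℋ) :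
    ‖C w‖ ^ 2 = (inner ℂ w ((C * C) w) : ℂ).re := by
  rw [← re_inner_self]
  congr 1
  calc (inner ℂ (C w) (C w) : ℂ)
      = inner ℂ w (adjoint C (C w)) := (adjoint_inner_right C w (C w)).symm
    _ = inner ℂ w ((C * C) w) := by rw [hC.adjoint_eq]; rfl

lemma sum_norm_sq (htp : IsTensorD tpv tp) (ha : QBN a) (n : ℕ) (w : ℋ) :
    ∑ v ∈ LamD d, ‖Cop a tp K n v w‖ ^ 2 = ‖w‖ ^ 2 := by
  have h1 : ∀ v ∈ LamD d, ‖Cop a tp K n v w‖ ^ 2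
      = (inner ℂ w ((Cop a tp K n v * Cop a tp K n v) w) : ℂ).re :=
    fun v _ => norm_sq_conj _ (Cop_sa K htp n v) w
  rw [Finset.sum_congr rfl h1, ← Complex.re_sum, ← inner_sum,
    ← ContinuousLinearMap.sum_apply, sum_Cop K htp ha n, ContinuousLinearMap.one_apply,
    re_inner_self]

lemma trE_sum_conj (htp : IsTensorD tpv tp) (ha : QBN a) (n : ℕ) {T : ℋ →L[ℂ] ℋ}
    (hT : T.IsPositive) :
    ∑ v ∈ LamD d, trE (Cop a tp K n v * T * Cop a tp K n v) = trE T := by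
  have h1 : ∀ v ∈ LamD d, trE (Cop a tp K n v * T * Cop a tp K n v)
      = ∑' τ, ENNReal.ofReal (‖Cop a tp K n v (CFC.sqrt T (Z τ))‖ ^ 2) :=
    fun v _ => trE_conj hT (Cop_sa K htp n v)
  rw [Finset.sum_congr rfl h1, ← Summable.tsum_finsetSum (fun v _ => ENNReal.summable), trE_pos_eq hT]
  refine tsum_congr fun τ => ?_
  rw [← ENNReal.ofReal_sum_of_nonneg (fun v _ => sq_nonneg _), sum_norm_sq K htp ha n]

lemma conj_pos (htp : IsTensorD tpv tp) (n : ℕ) (v : Fin d → ℤ) {T : ℋ →L[ℂ] ℋ}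
    (hT : T.IsPositive) : (Cop a tp K n v * T * Cop a tp K n v).IsPositive := by
  have h := hT.conj_adjoint (Cop a tp K n v)
  rw [(Cop_sa K htp n v).adjoint_eq] at h
  rwa [← ContinuousLinearMap.mul_def, ← ContinuousLinearMap.mul_def, ← mul_assoc] at h

lemma JmapD_pos (htp : IsTensorD tpv tp) (n : ℕ) {ω : (Fin d → ℤ) → ℋ →L[ℂ] ℋ}
    (hpos : ∀ x, (ω x).IsPositive) (x : Fin d → ℤ) :
    (JmapD a tp K n ω x).IsPositive := by
  refine Finset.sum_induction _ _ (fun A B hA hB => hA.add hB)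
    ContinuousLinearMap.isPositive_zero fun v _ => conj_pos K htp n v (hpos (x - v))

lemma trE_JmapD (htp : IsTensorD tpv tp) (n : ℕ) {ω : (Fin d → ℤ) → ℋ →L[ℂ] ℋ}
    (hpos : ∀ x, (ω x).IsPositive) (x : Fin d → ℤ) :
    trE (JmapD a tp K n ω x)
      = ∑ v ∈ LamD d, trE (Cop a tp K n v * ω (x - v) * Cop a tp K n v) := by
  simp only [trE]
  rw [← Summable.tsum_finsetSum (fun v _ => ENNReal.summable)]
  refine tsum_congr fun σ => ?_
  have hterm : ∀ v ∈ LamD d,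
      (0:ℝ) ≤ (inner ℂ (Z σ) ((Cop a tp K n v * ω (x - v) * Cop a tp K n v) (Z σ)) : ℂ).re := by
    intro v _
    exact (Complex.nonneg_iff.mp ((conj_pos K htp n v (hpos (x - v))).inner_nonneg_right (Z σ))).1
  rw [← ENNReal.ofReal_sum_of_nonneg hterm]
  congr 1
  rw [JmapD, ContinuousLinearMap.sum_apply, inner_sum, Complex.re_sum]

lemma trE_total (htp : IsTensorD tpv tp) (ha : QBN a) (n : ℕ) {ω : (Fin d → ℤ) → ℋ →L[ℂ] ℋ}
    (hpos : ∀ x, (ω x).IsPositive) (hfin : ∀ x, HasFiniteTrace Z (ω x))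
    (hsum : HasSum (fun x => trB Z (ω x)) 1) :
    ∑' x : Fin d → ℤ, trE (JmapD a tp K n ω x) = 1 := by
  have hre : ∀ y : Fin d → ℤ, ∀ σ : Finset ℕ, 0 ≤ (inner ℂ (Z σ) (ω y (Z σ)) : ℂ).re :=
    fun y σ => by exact (Complex.nonneg_iff.mp ((hpos y).inner_nonneg_right (Z σ))).1
  calc ∑' x, trE (JmapD a tp K n ω x)
      = ∑' x, ∑ v ∈ LamD d, trE (Cop a tp K n v * ω (x - v) * Cop a tp K n v) :=
        tsum_congr fun x => trE_JmapD K htp n hpos x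
    _ = ∑ v ∈ LamD d, ∑' x, trE (Cop a tp K n v * ω (x - v) * Cop a tp K n v) :=
        Summable.tsum_finsetSum fun v _ => ENNReal.summable
    _ = ∑ v ∈ LamD d, ∑' y, trE (Cop a tp K n v * ω y * Cop a tp K n v) := by
        refine Finset.sum_congr rfl fun v _ => ?_
        simpa using
          (Equiv.subRight v).tsum_eq fun y => trE (Cop a tp K n v * ω y * Cop a tp K n v)
    _ = ∑' y, ∑ v ∈ LamD d, trE (Cop a tp K n v * ω y * Cop a tp K n v) :=
        (Summable.tsum_finsetSum fun v _ => ENNReal.summable).symm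
    _ = ∑' y, trE (ω y) := tsum_congr fun y => trE_sum_conj K htp ha n (hpos y)
    _ = ∑' y, ENNReal.ofReal (trB Z (ω y)) := by
        refine tsum_congr fun y => ?_
        rw [trB, ENNReal.ofReal_tsum_of_nonneg (hre y) (hfin y)]
        rfl
    _ = ENNReal.ofReal (∑' y, trB Z (ω y)) :=
        (ENNReal.ofReal_tsum_of_nonneg (fun y => tsum_nonneg (hre y)) hsum.summable).symm
    _ = 1 := by rw [hsum.tsum_eq, ENNReal.ofReal_one]

end Main
/-- For every `n` and every `d`-dimensional nucleus `ω` on `ℋ`, the map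
`x ↦ ∑_{ε ∈ Λ^d} C_n^{(ε)} ω(x-ε) C_n^{(ε)}` is again a `d`-dimensional nucleus on `ℋ`;
this defines the mapping `𝔍_n^{(d)}`. -/
theorem stmt6 (a : ℕ → ℋ →L[ℂ] ℋ) (ha : QBN a)
    (d : ℕ) (hd : 2 ≤ d)
    (Hd : Type) [NormedAddCommGroup Hd] [InnerProductSpace ℂ Hd] [CompleteSpace Hd]
    (tpv : MultilinearMap ℂ (fun _ : Fin d => ℋ) Hd)
    (tp : (Fin d → ℋ →L[ℂ] ℋ) → (Hd →L[ℂ] Hd))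
    (htp : IsTensorD tpv tp)
    (K : Hd ≃ₗᵢ[ℂ] ℋ) (n : ℕ)
    (ω : (Fin d → ℤ) → ℋ →L[ℂ] ℋ) (hω : IsNucleusOn Z ω) :
    IsNucleusOn Z (JmapD a tp K n ω) := by
  obtain ⟨hpos, hfin, hsum⟩ := hω
  have hpos' : ∀ x, (JmapD a tp K n ω x).IsPositive := JmapD_pos K htp n hpos
  have htot := trE_total K htp ha n hpos hfin hsum
  have hb : ∀ x, trE (JmapD a tp K n ω x) ≠ ⊤ := by
    intro x
    have hle := ENNReal.le_tsum (f := fun x => trE (JmapD a tp K n ω x)) x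
    rw [htot] at hle
    exact ne_top_of_le_ne_top ENNReal.one_ne_top hle
  have hre' : ∀ x σ, 0 ≤ (inner ℂ (Z σ) (JmapD a tp K n ω x (Z σ)) : ℂ).re := fun x σ => by
    exact (Complex.nonneg_iff.mp ((hpos' x).inner_nonneg_right (Z σ))).1
  have hfin' : ∀ x, HasFiniteTrace Z (JmapD a tp K n ω x) := by
    intro x
    have h1 := ENNReal.summable_toReal
      (f := fun σ => ENNReal.ofReal ((inner ℂ (Z σ) (JmapD a tp K n ω x (Z σ)) : ℂ).re)) (hb x)
    exact h1.congr fun σ => ENNReal.toReal_ofReal (hre' x σ)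
  have hof : ∀ x, ENNReal.ofReal (trB Z (JmapD a tp K n ω x)) = trE (JmapD a tp K n ω x) := by
    intro x
    rw [trB, ENNReal.ofReal_tsum_of_nonneg (hre' x) (hfin' x)]
    rfl
  refine ⟨hpos', hfin', ?_⟩
  have hnn : ∀ x, 0 ≤ trB Z (JmapD a tp K n ω x) := fun x => tsum_nonneg (hre' x)
  have hsummable : Summable fun x => trB Z (JmapD a tp K n ω x) := by
    have h1 := ENNReal.summable_toReal (f := fun x => trE (JmapD a tp K n ω x))
      (by rw [htot]; exact ENNReal.one_ne_top)
    refine h1.congr fun x => ?_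
    show (trE (JmapD a tp K n ω x)).toReal = trB Z (JmapD a tp K n ω x)
    rw [← hof x]
    exact ENNReal.toReal_ofReal (hnn x)
  have hts : ∑' x, trB Z (JmapD a tp K n ω x) = 1 := by
    have h2 : ENNReal.ofReal (∑' x, trB Z (JmapD a tp K n ω x)) = 1 := by
      rw [ENNReal.ofReal_tsum_of_nonneg hnn hsummable, tsum_congr hof, htot]
    rwa [ENNReal.ofReal_eq_one] at h2
  exact hts ▸ hsummable.hasSum
end
end

section
/- Let (ω^{(n)})_{n≥0} satisfy ω^{(n+1)} = 𝔍_n^{(d)} ω^{(n)} for all n ≥ 0 (the nucleus sequence of the d-dimensional open QBN walk), and suppose that ω^{(0)}(x) = K (ρ_1^{(0)}(x_1) ⊗ ⋯ ⊗ ρ_d^{(0)}(x_d)) K⁻¹ for all x = (x_1, …, x_d) ∈ ℤ^d, where ρ_1^{(0)}, …, ρ_d^{(0)} are 1-dimensional nucleuses on H. Then for every n ≥ 1 one has ω^{(n)}(x) = K (ρ_1^{(n)}(x_1) ⊗ ⋯ ⊗ ρ_d^{(n)}(x_d)) K⁻¹ for all x ∈ ℤ^d, where ρ_j^{(n)} =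 (𝔍_{n−1} ∘ ⋯ ∘ 𝔍_0) ρ_j^{(0)} for j = 1, …, d. In particular the walk preserves separability of states. -/
/- Common setup: quantum Bernoulli noises on `ℋ = ℓ²(Γ)`, `Γ` = finite subsets of `ℕ`. -/

noncomputable section

open ContinuousLinearMap Filter

/-- Separability-preserving property: if the initial nucleus factorizes as
`ω⁽⁰⁾(x) = K (ρ_1⁽⁰⁾(x_1) ⊗ ⋯ ⊗ ρ_d⁽⁰⁾(x_d)) K⁻¹` with 1-dimensional nucleuses `ρ_j⁽⁰⁾`, then
for every `n ≥ 1`, `ω⁽ⁿ⁾(x) = K (ρ_1⁽ⁿ⁾(x_1) ⊗ ⋯ ⊗ ρ_d⁽ⁿ⁾(x_d)) K⁻¹` with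
`ρ_j⁽ⁿ⁾ = (𝔍_{n-1} ∘ ⋯ ∘ 𝔍_0) ρ_j⁽⁰⁾`. -/
theorem stmt12 (a : ℕ → ℋ →L[ℂ] ℋ) (ha : QBN a)
    (d : ℕ) (hd : 2 ≤ d)
    (Hd : Type) [NormedAddCommGroup Hd] [InnerProductSpace ℂ Hd] [CompleteSpace Hd]
    (tpv : MultilinearMap ℂ (fun _ : Fin d => ℋ) Hd)
    (tp : (Fin d → ℋ →L[ℂ] ℋ) → (Hd →L[ℂ] Hd))
    (htp : IsTensorD tpv tp)
    (K : Hd ≃ₗᵢ[ℂ] ℋ)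
    (ρ : Fin d → ℤ → ℋ →L[ℂ] ℋ) (hρ : ∀ j, IsNucleusOn Z (ρ j))
    (ω : ℕ → (Fin d → ℤ) → ℋ →L[ℂ] ℋ)
    (hev : ∀ n : ℕ, ω (n + 1) = JmapD a tp K n (ω n))
    (hinit : ∀ x : Fin d → ℤ, ω 0 x = conjK K (tp fun j => ρ j (x j))) :
    ∀ n : ℕ, 1 ≤ n → ∀ x : Fin d → ℤ,
      ω n x = conjK K (tp fun j => seqJ a (ρ j) n (x j)) := by
  obtain ⟨-, hdense, htp3⟩ := htp
  -- Extensionality on the dense span of elementary tensors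
  have hext : ∀ S T : Hd →L[ℂ] Hd, (∀ u, S (tpv u) = T (tpv u)) → S = T := by
    intro S T h
    have hEq : Set.EqOn S T (Set.range fun u => tpv u) := by
      rintro _ ⟨u, rfl⟩; exact h u
    have hEq2 : Set.EqOn S T (Submodule.span ℂ (Set.range fun u => tpv u) : Set Hd) :=
      LinearMap.eqOn_span hEq
    have hd2 : Dense (Submodule.span ℂ (Set.range fun u => tpv u) : Set Hd) := by
      rw [← Submodule.dense_iff_topologicalClosure_eq_top] at hdense
      exact hdense
    exact ContinuousLinearMap.coe_injective
      (LinearMap.coe_injective (Continuous.ext_on hd2 S.continuous T.continuous hEq2))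
  -- conjugation is multiplicative
  have hconj : ∀ S T : Hd →L[ℂ] Hd, conjK K S * conjK K T = conjK K (S * T) := by
    intro S T; ext x
    simp [conjK, ContinuousLinearMap.mul_apply, ContinuousLinearMap.comp_apply]
  -- conjugation commutes with finite sums
  have hconjSum : ∀ (s : Finset (Fin d → ℤ)) (F : (Fin d → ℤ) → Hd →L[ℂ] Hd),
      (∑ v ∈ s, conjK K (F v)) = conjK K (∑ v ∈ s, F v) := by
    intro s F; ext x
    simp [conjK, ContinuousLinearMap.sum_apply, ContinuousLinearMap.comp_apply]
  -- tp of pointwise products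
  have htpMul : ∀ A B C : Fin d → ℋ →L[ℂ] ℋ,
      tp A * tp B * tp C = tp (fun j => A j * B j * C j) := by
    intro A B C
    apply hext
    intro u
    simp only [ContinuousLinearMap.mul_apply, htp3]
  -- tp of pointwise sums over Lam
  have htpSum : ∀ F : Fin d → ℤ → ℋ →L[ℂ] ℋ,
      tp (fun j => ∑ e ∈ Lam, F j e) = ∑ v ∈ LamD d, tp (fun j => F j (v j)) := by
    intro F
    apply hext
    intro u
    rw [htp3]
    have : (tpv fun j => (∑ e ∈ Lam, F j e) (u j))
        = tpv fun j => ∑ e ∈ Lam, F j e (u j) :=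
      congrArg tpv (funext fun j => by simp)
    rw [this]
    rw [MultilinearMap.map_sum_finset tpv (fun j e => F j e (u j)) (fun _ => Lam)]
    rw [ContinuousLinearMap.sum_apply]
    refine Finset.sum_congr rfl ?_
    intro v hv
    rw [htp3]
  -- Jmap1 as a sum over Lam
  have hJ1 : ∀ (n : ℕ) (σ : ℤ → ℋ →L[ℂ] ℋ) (y : ℤ),
      Jmap1 a n σ y = ∑ e ∈ Lam, Bop a n e * σ (y - e) * Bop a n e := by
    intro n σ y
    have hne : (-1 : ℤ) ≠ 1 := by decide
    rw [Lam, Finset.sum_pair hne]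
    simp [Jmap1, Bop, sub_neg_eq_add]
  have key : ∀ n : ℕ, ∀ x : Fin d → ℤ,
      ω n x = conjK K (tp fun j => seqJ a (ρ j) n (x j)) := by
    intro n
    induction n with
    | zero => intro x; exact hinit x
    | succ n ih =>
      intro x
      rw [hev n]
      show (∑ v ∈ LamD d, Cop a tp K n v * ω n (x - v) * Cop a tp K n v) = _
      have h1 : ∀ v ∈ LamD d, Cop a tp K n v * ω n (x - v) * Cop a tp K n v
          = conjK K (tp fun j => Bop a n (v j) * seqJ a (ρ j) n (x j - v j) * Bop a n (v j)) := by
        intro v _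
        rw [ih (x - v)]
        have : ω n (x - v) = ω n (x - v) := rfl
        show conjK K (tp fun j => Bop a n (v j)) * conjK K (tp fun j => seqJ a (ρ j) n ((x - v) j))
            * conjK K (tp fun j => Bop a n (v j)) = _
        rw [hconj, hconj, htpMul]
        rfl
      rw [Finset.sum_congr rfl h1, hconjSum]
      congr 1
      rw [← htpSum fun j e => Bop a n e * seqJ a (ρ j) n (x j - e) * Bop a n e]
      congr 1
      funext j
      rw [← hJ1 n (seqJ a (ρ j) n) (x j)]
      rfl
  intro n _ x
  exact key n x
end
end

section
/- Let (ω^{(n)})_{n≥0} satisfy ω^{(n+1)} = 𝔍_n^{(d)} ω^{(n)} for all n ≥ 0, and suppose ω^{(0)}(x) = K (ρ_1^{(0)}(x_1) ⊗ ⋯ ⊗ ρ_d^{(0)}(x_d)) K⁻¹ for all x = (x_1, …, x_d) ∈ ℤ^d, where ρ_1^{(0)}, …, ρ_d^{(0)} are 1-dimensional nucleuses on H. Then for every n ≥ 1 and every x = (x_1, …, x_d) ∈ ℤ^d, the probability distribution of the walk factorizes: Tr[ω^{(n)}(x)] = ∏_{j=1}^d Tr[ρ_j^{(n)}(x_j)],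 where ρ_j^{(n)} = (𝔍_{n−1} ∘ ⋯ ∘ 𝔍_0) ρ_j^{(0)}. -/
/- Common setup: quantum Bernoulli noises on `ℋ = ℓ²(Γ)`, `Γ` = finite subsets of `ℕ`. -/

noncomputable section

open ContinuousLinearMap Filter

/-! ### Auxiliary machinery for `stmt13` -/

namespace Stmt13Aux

open scoped InnerProductSpace ENNReal
open ContinuousLinearMap

set_option maxHeartbeats 1000000
set_option synthInstance.maxHeartbeats 1000000

/-- Real tsum of a nonnegative function equals toReal of the `ℝ≥0∞` tsum. -/
lemma tsum_nonneg_toReal {ι : Type*} {f : ι → ℝ} (hf : ∀ i, 0 ≤ f i) :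
    ∑' i, f i = (∑' i, ENNReal.ofReal (f i)).toReal := by
  by_cases h : Summable f
  · rw [← ENNReal.ofReal_tsum_of_nonneg hf h, ENNReal.toReal_ofReal (tsum_nonneg hf)]
  · rw [tsum_eq_zero_of_not_summable h]
    rcases eq_or_ne (∑' i, ENNReal.ofReal (f i)) ∞ with he | he
    · simp [he]
    · exact absurd ((ENNReal.summable_toReal he).congr fun i => by
        rw [ENNReal.toReal_ofReal (hf i)]) h

section Hilbert

variable {E : Type} [NormedAddCommGroup E] [InnerProductSpace ℂ E] [CompleteSpace E]
variable {ι κ : Type}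

/-- Parseval identity. -/
lemma parseval (b : HilbertBasis ι ℂ E) (v : E) :
    HasSum (fun i => ‖(⟪b i, v⟫_ℂ)‖ ^ 2) (‖v‖ ^ 2) := by
  have h := b.hasSum_inner_mul_inner v v
  have h2 : ∀ i, ⟪v, b i⟫_ℂ * ⟪b i, v⟫_ℂ = ((‖(⟪b i, v⟫_ℂ)‖ ^ 2 : ℝ) : ℂ) := by
    intro i
    rw [← inner_conj_symm v (b i), RCLike.conj_mul]
    norm_cast
  simp only [h2] at h
  have h3 := h.mapL Complex.reCLM
  simp only [Complex.reCLM_apply, Complex.ofReal_re] at h3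
  have h4 : (⟪v, v⟫_ℂ).re = ‖v‖ ^ 2 := by
    rw [← RCLike.re_to_complex, inner_self_eq_norm_sq]
  rwa [h4] at h3

lemma eparseval (b : HilbertBasis ι ℂ E) (v : E) :
    ∑' i, ENNReal.ofReal (‖(⟪b i, v⟫_ℂ)‖ ^ 2) = ENNReal.ofReal (‖v‖ ^ 2) := by
  rw [← ENNReal.ofReal_tsum_of_nonneg (fun i => sq_nonneg _) (parseval b v).summable,
    (parseval b v).tsum_eq]

/-- `∑_i ‖W b_i‖²` as an `ℝ≥0∞`-valued quantity. -/
def nsq (b : ι → E) (W : E →L[ℂ] E) : ℝ≥0∞ :=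
  ∑' i, ENNReal.ofReal (‖W (b i)‖ ^ 2)

lemma nsq_adjoint (b : HilbertBasis ι ℂ E) (c : HilbertBasis κ ℂ E)
    (W : E →L[ℂ] E) : nsq b (adjoint W) = nsq c W := by
  unfold nsq
  have h1 : ∀ i, ENNReal.ofReal (‖adjoint W (b i)‖ ^ 2)
      = ∑' j, ENNReal.ofReal (‖(⟪b i, W (c j)⟫_ℂ)‖ ^ 2) := by
    intro i
    rw [← eparseval c (adjoint W (b i))]
    congr 1
    funext j
    rw [adjoint_inner_right, ← norm_inner_symm]
  have h2 : ∀ j, ENNReal.ofReal (‖W (c j)‖ ^ 2)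
      = ∑' i, ENNReal.ofReal (‖(⟪b i, W (c j)⟫_ℂ)‖ ^ 2) := fun j =>
    (eparseval b (W (c j))).symm
  calc ∑' i, ENNReal.ofReal (‖adjoint W (b i)‖ ^ 2)
      = ∑' i, ∑' j, ENNReal.ofReal (‖(⟪b i, W (c j)⟫_ℂ)‖ ^ 2) := by
        exact tsum_congr h1
    _ = ∑' j, ∑' i, ENNReal.ofReal (‖(⟪b i, W (c j)⟫_ℂ)‖ ^ 2) := ENNReal.tsum_comm
    _ = ∑' j, ENNReal.ofReal (‖W (c j)‖ ^ 2) := (tsum_congr h2).symm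

/-- Trace of a finite sum of operators of the form `W W*`. -/
lemma trB_sum_ww (b : HilbertBasis ι ℂ E) {P : Type*} (s : Finset P)
    (W : P → E →L[ℂ] E) :
    trB (⇑b) (∑ p ∈ s, W p * adjoint (W p)) = (∑ p ∈ s, nsq (⇑b) (adjoint (W p))).toReal := by
  have hterm : ∀ i, (⟪b i, (∑ p ∈ s, W p * adjoint (W p)) (b i)⟫_ℂ).re
      = ∑ p ∈ s, ‖adjoint (W p) (b i)‖ ^ 2 := by
    intro i
    rw [ContinuousLinearMap.sum_apply, inner_sum, Complex.re_sum]
    refine Finset.sum_congr rfl fun p _ => ?_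
    rw [ContinuousLinearMap.mul_apply, ← adjoint_inner_left, ← RCLike.re_to_complex,
      inner_self_eq_norm_sq]
  unfold trB
  calc ∑' i, (⟪b i, (∑ p ∈ s, W p * adjoint (W p)) (b i)⟫_ℂ).re
      = ∑' i, ∑ p ∈ s, ‖adjoint (W p) (b i)‖ ^ 2 := tsum_congr hterm
    _ = (∑' i, ENNReal.ofReal (∑ p ∈ s, ‖adjoint (W p) (b i)‖ ^ 2)).toReal := by
        exact tsum_nonneg_toReal fun i => Finset.sum_nonneg fun p _ => sq_nonneg _
    _ = (∑' i, ∑ p ∈ s, ENNReal.ofReal (‖adjoint (W p) (b i)‖ ^ 2)).toReal := by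
        congr 1
        exact tsum_congr fun i => ENNReal.ofReal_sum_of_nonneg fun p _ => sq_nonneg _
    _ = (∑ p ∈ s, nsq (⇑b) (adjoint (W p))).toReal := by
        congr 1
        exact Summable.tsum_finsetSum fun p _ => ENNReal.summable

end Hilbert

/-- Fubini for products over `Fin m` in `ℝ≥0∞`. -/
lemma tsum_pi_prod {X : Type*} : ∀ {m : ℕ} (g : Fin m → X → ℝ≥0∞),
    ∑' f : Fin m → X, ∏ j, g j (f j) = ∏ j, ∑' x, g j x := by
  intro m
  induction m with
  | zero =>
    intro g
    simp only [Finset.univ_eq_empty, Finset.prod_empty]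
    exact tsum_eq_single (fun i => i.elim0) fun b hb =>
      absurd (funext fun i => i.elim0) hb
  | succ m ih =>
    intro g
    rw [← (Fin.consEquiv (fun _ : Fin (m + 1) => X)).tsum_eq]
    have : ∀ p : X × (Fin m → X),
        (∏ j, g j ((Fin.consEquiv (fun _ : Fin (m + 1) => X)) p j))
          = g 0 p.1 * ∏ j : Fin m, g j.succ (p.2 j) := by
      rintro ⟨x, f⟩
      rw [Fin.prod_univ_succ]
      simp [Fin.consEquiv]
    rw [tsum_congr this, ENNReal.tsum_prod']
    calc ∑' x, ∑' f : Fin m → X, g 0 x * ∏ j : Fin m, g j.succ (f j)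
        = ∑' x, g 0 x * ∑' f : Fin m → X, ∏ j : Fin m, g j.succ (f j) := by
          exact tsum_congr fun x => ENNReal.tsum_mul_left
      _ = (∑' x, g 0 x) * ∑' f : Fin m → X, ∏ j : Fin m, g j.succ (f j) :=
          ENNReal.tsum_mul_right
      _ = ∏ j, ∑' x, g j x := by rw [ih, Fin.prod_univ_succ]

/-- Reindexing a sum over `piFinset` on `Fin (n+1)` via `Fin.snoc`. -/
lemma sum_piFinset_succ {α : Type*} [DecidableEq α] {M : Type*} [AddCommMonoid M]
    (s : Finset α) (n : ℕ) (f : (Fin (n + 1) → α) → M) :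
    ∑ q ∈ Fintype.piFinset (fun _ : Fin (n + 1) => s), f q
      = ∑ e ∈ s, ∑ q ∈ Fintype.piFinset (fun _ : Fin n => s), f (Fin.snoc q e) := by
  rw [← Finset.sum_product']
  refine Finset.sum_bij' (fun q _ => (q (Fin.last n), fun i => q i.castSucc))
    (fun p _ => Fin.snoc p.2 p.1) ?_ ?_ ?_ ?_ ?_
  · intro q hq
    simp only [Fintype.mem_piFinset] at hq
    simp only [Finset.mem_product, Fintype.mem_piFinset]
    exact ⟨hq _, fun i => hq _⟩
  · intro p hp
    simp only [Finset.mem_product, Fintype.mem_piFinset] at hp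
    simp only [Fintype.mem_piFinset]
    intro i
    refine Fin.lastCases ?_ ?_ i
    · rw [Fin.snoc_last]; exact hp.1
    · intro j; rw [Fin.snoc_castSucc]; exact hp.2 j
  · intro q _
    funext i
    refine Fin.lastCases ?_ ?_ i
    · simp
    · intro j; simp
  · intro p _
    simp
  · intro q _
    show f q = f (Fin.snoc (fun i => q i.castSucc) (q (Fin.last n)))
    have hq : (Fin.snoc (fun i => q i.castSucc) (q (Fin.last n)) : Fin (n + 1) → α) = q := by
      funext i
      refine Fin.lastCases ?_ ?_ i
      · simp
      · intro j; simp
    rw [hq]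

instance instCFCH : ContinuousFunctionalCalculus ℝ (ℋ →L[ℂ] ℋ) IsSelfAdjoint :=
  IsSelfAdjoint.instContinuousFunctionalCalculus

instance instNUCFCH : NonUnitalContinuousFunctionalCalculus ℝ (ℋ →L[ℂ] ℋ) IsSelfAdjoint :=
  inferInstance

/-- Square root of a positive operator on `ℋ`. -/
lemma exists_sqrt (T : ℋ →L[ℂ] ℋ) (hT : T.IsPositive) :
    ∃ s : ℋ →L[ℂ] ℋ, adjoint s = s ∧ s * s = T := by
  have h0 : 0 ≤ T := (ContinuousLinearMap.nonneg_iff_isPositive T).mpr hT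
  refine ⟨CFC.sqrt T, ?_, CFC.sqrt_mul_sqrt_self T h0⟩
  have := ((ContinuousLinearMap.nonneg_iff_isPositive
    (CFC.sqrt T)).mp (CFC.sqrt_nonneg T)).isSelfAdjoint
  rwa [IsSelfAdjoint, star_eq_adjoint] at this

/-! ### The canonical Hilbert basis of `ℋ` -/

lemma Z_orthonormal : Orthonormal ℂ Z := by
  rw [orthonormal_iff_ite]
  intro σ τ
  rw [Z, Z, lp.inner_single_left]
  rcases eq_or_ne σ τ with rfl | h
  · simp [lp.single_apply_self, RCLike.inner_apply]
  · simp only [RCLike.inner_apply, map_one, one_mul, if_neg h]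
    rw [mul_one]; exact lp.single_apply_ne (E := fun _ : Finset ℕ => ℂ) 2 τ (1 : ℂ) h

lemma Z_dense : ⊤ ≤ (Submodule.span ℂ (Set.range Z)).topologicalClosure := by
  intro f _
  have hf := lp.hasSum_single (E := fun _ : Finset ℕ => ℂ) (p := 2) (by norm_num) f
  have hmem : f ∈ closure (Submodule.span ℂ (Set.range Z) : Set ℋ) := by
    refine mem_closure_of_tendsto hf (Filter.Eventually.of_forall fun s => ?_)
    refine SetLike.mem_coe.mpr (Submodule.sum_mem _ fun σ _ => ?_)
    have : lp.single 2 σ (f σ) = f σ • Z σ := by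
      rw [Z, ← lp.single_smul, smul_eq_mul, mul_one]
    rw [this]
    exact Submodule.smul_mem _ _ (Submodule.subset_span (Set.mem_range_self σ))
  rwa [← Submodule.topologicalClosure_coe, SetLike.mem_coe] at hmem

/-- The canonical Hilbert basis of `ℋ`. -/
def ZHB : HilbertBasis (Finset ℕ) ℂ ℋ := HilbertBasis.mk Z_orthonormal Z_dense

lemma coe_ZHB : ⇑ZHB = Z := HilbertBasis.coe_mk _ _

/-! ### Tensor product machinery -/

section TP

variable {d : ℕ} {Hd : Type} [NormedAddCommGroup Hd] [InnerProductSpace ℂ Hd] [CompleteSpace Hd]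
  {tpv : MultilinearMap ℂ (fun _ : Fin d => ℋ) Hd}
  {tp : (Fin d → ℋ →L[ℂ] ℋ) → (Hd →L[ℂ] Hd)} (htp : IsTensorD tpv tp)

include htp

lemma dense_tpv : Dense ((Submodule.span ℂ (Set.range fun u => tpv u) : Submodule ℂ Hd) : Set Hd) :=
  Submodule.dense_iff_topologicalClosure_eq_top.mpr htp.2.1

lemma tp_ext {f g : Hd →L[ℂ] Hd} (h : ∀ u, f (tpv u) = g (tpv u)) : f = g :=
  ContinuousLinearMap.ext_on (dense_tpv htp) (by rintro x ⟨u, rfl⟩; exact h u)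

lemma vec_ext {v w : Hd} (h : ∀ u, ⟪tpv u, v⟫_ℂ = ⟪tpv u, w⟫_ℂ) : v = w := by
  have horth : (Submodule.span ℂ (Set.range fun u => tpv u))ᗮ = ⊥ :=
    Submodule.topologicalClosure_eq_top_iff.mp htp.2.1
  have hvw : v - w ∈ (Submodule.span ℂ (Set.range fun u => tpv u))ᗮ := by
    rw [Submodule.mem_orthogonal]
    intro x hx
    induction hx using Submodule.span_induction with
    | mem x hx =>
      obtain ⟨u, rfl⟩ := hx
      rw [inner_sub_right, h u, sub_self]
    | zero => rw [inner_zero_left]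
    | add x y _ _ hx hy => rw [inner_add_left, hx, hy, add_zero]
    | smul c x _ hx => rw [inner_smul_left, hx, mul_zero]
  rw [horth, Submodule.mem_bot, sub_eq_zero] at hvw
  exact hvw

lemma tp_one : tp (fun _ => 1) = 1 := by
  refine tp_ext htp fun u => ?_
  rw [htp.2.2]
  simp

lemma tp_mul (A B : Fin d → ℋ →L[ℂ] ℋ) :
    tp A * tp B = tp (fun j => A j * B j) := by
  refine tp_ext htp fun u => ?_
  rw [ContinuousLinearMap.mul_apply, htp.2.2, htp.2.2, htp.2.2]
  rfl

lemma tp_adjoint (A : Fin d → ℋ →L[ℂ] ℋ) :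
    adjoint (tp A) = tp (fun j => adjoint (A j)) := by
  symm
  refine tp_ext htp fun u => ?_
  refine vec_ext htp fun w => ?_
  rw [htp.2.2, adjoint_inner_right, htp.2.2, htp.1, htp.1]
  refine Finset.prod_congr rfl fun j _ => ?_
  rw [adjoint_inner_right]

lemma norm_tpv_sq (u : Fin d → ℋ) : ‖tpv u‖ ^ 2 = ∏ j, ‖u j‖ ^ 2 := by
  have h := htp.1 u u
  rw [inner_self_eq_norm_sq_to_K] at h
  have h2 : ∀ j ∈ Finset.univ, ⟪u j, u j⟫_ℂ = ((‖u j‖ : ℂ)) ^ 2 := fun j _ =>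
    inner_self_eq_norm_sq_to_K (u j)
  rw [Finset.prod_congr rfl h2] at h
  have : ((‖tpv u‖ ^ 2 : ℝ) : ℂ) = ((∏ j, ‖u j‖ ^ 2 : ℝ) : ℂ) := by push_cast; exact h
  exact_mod_cast this

/-- The induced orthonormal family `e τ = ⊗ⱼ Z (τ j)` on `Hd`. -/
def tbasisD (tpv : MultilinearMap ℂ (fun _ : Fin d => ℋ) Hd) :
    (Fin d → Finset ℕ) → Hd := fun τ => tpv (fun j => Z (τ j))

lemma tbasisD_orthonormal : Orthonormal ℂ (tbasisD tpv) := by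
  rw [orthonormal_iff_ite]
  intro τ τ'
  rw [tbasisD, tbasisD, htp.1]
  have hZ := orthonormal_iff_ite.mp Z_orthonormal
  rcases eq_or_ne τ τ' with rfl | h
  · simp [hZ, Z_orthonormal.1]
  · rw [if_neg h]
    obtain ⟨j, hj⟩ := Function.ne_iff.mp h
    refine Finset.prod_eq_zero (Finset.mem_univ j) ?_
    rw [hZ, if_neg hj]

lemma norm_tpv (u : Fin d → ℋ) : ‖tpv u‖ = ∏ j, ‖u j‖ := by
  have h := norm_tpv_sq htp u
  have h1 : (0:ℝ) ≤ ‖tpv u‖ := norm_nonneg _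
  have h2 : (0:ℝ) ≤ ∏ j, ‖u j‖ := Finset.prod_nonneg fun j _ => norm_nonneg _
  calc ‖tpv u‖ = Real.sqrt (‖tpv u‖ ^ 2) := (Real.sqrt_sq h1).symm
    _ = Real.sqrt ((∏ j, ‖u j‖) ^ 2) := by rw [h, ← Finset.prod_pow]
    _ = ∏ j, ‖u j‖ := Real.sqrt_sq h2

lemma tbasisD_dense : ⊤ ≤ (Submodule.span ℂ (Set.range (tbasisD tpv))).topologicalClosure := by
  classical
  set M := (Submodule.span ℂ (Set.range (tbasisD tpv))).topologicalClosure with hM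
  -- continuous version of tpv
  let tpvC : ContinuousMultilinearMap ℂ (fun _ : Fin d => ℋ) Hd :=
    MultilinearMap.mkContinuous tpv 1 (fun u => by rw [one_mul, norm_tpv htp])
  have htpvC : ∀ u, tpvC u = tpv u := fun u => rfl
  -- the dense product set
  set Dset : Set (Fin d → ℋ) :=
    Set.pi Set.univ (fun _ => (Submodule.span ℂ (Set.range Z) : Set ℋ)) with hDset
  have hDsub : ∀ w ∈ Dset, tpv w ∈ Submodule.span ℂ (Set.range (tbasisD tpv)) := by
    intro w hw
    have hrep : ∀ j : Fin d, ∃ c : Finset ℕ →₀ ℂ, (c.sum fun σ z => z • Z σ) = w j := by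
      intro j
      exact (Finsupp.mem_span_range_iff_exists_finsupp).mp (hw j (Set.mem_univ j))
    choose c hc using hrep
    have hw' : w = fun j => ∑ σ ∈ (c j).support, (c j) σ • Z σ := by
      funext j
      rw [← hc j]
      rfl
    rw [hw', MultilinearMap.map_sum_finset]
    refine Submodule.sum_mem _ fun r _ => ?_
    have : tpv (fun j => (c j) (r j) • Z (r j)) = (∏ j, (c j) (r j)) • tbasisD tpv r :=
      MultilinearMap.map_smul_univ tpv _ _
    rw [this]
    exact Submodule.smul_mem _ _ (Submodule.subset_span (Set.mem_range_self r))
  have hZd : Dense ((Submodule.span ℂ (Set.range Z) : Submodule ℂ ℋ) : Set ℋ) :=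
    Submodule.dense_iff_topologicalClosure_eq_top.mpr (top_le_iff.mp Z_dense)
  have hDdense : closure Dset = Set.univ := by
    rw [hDset, closure_pi_set]
    simp [hZd.closure_eq]
  have tpv_mem : ∀ u : Fin d → ℋ, tpv u ∈ M := by
    intro u
    have hu : u ∈ closure Dset := by rw [hDdense]; trivial
    have h1 : tpvC u ∈ tpvC '' closure Dset := Set.mem_image_of_mem _ hu
    have h2 : tpvC u ∈ closure (tpvC '' Dset) :=
      image_closure_subset_closure_image tpvC.coe_continuous h1
    have h3 : closure (⇑tpvC '' Dset)
        ⊆ closure ((Submodule.span ℂ (Set.range (tbasisD tpv)) : Submodule ℂ Hd) : Set Hd) := by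
      refine closure_mono ?_
      rintro _ ⟨w, hw, rfl⟩
      exact hDsub w hw
    have h4 : tpv u ∈ closure
        ((Submodule.span ℂ (Set.range (tbasisD tpv)) : Submodule ℂ Hd) : Set Hd) := h3 h2
    show tpv u ∈ (Submodule.span ℂ (Set.range (tbasisD tpv))).topologicalClosure
    rwa [← SetLike.mem_coe, Submodule.topologicalClosure_coe]
  have hle : Submodule.span ℂ (Set.range fun u => tpv u) ≤ M :=
    Submodule.span_le.mpr (by rintro _ ⟨u, rfl⟩; exact tpv_mem u)
  have hfin : (Submodule.span ℂ (Set.range fun u => tpv u)).topologicalClosure ≤ M :=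
    Submodule.topologicalClosure_minimal _ hle (Submodule.isClosed_topologicalClosure _)
  rw [htp.2.1] at hfin
  exact hfin

/-- Tensor Hilbert basis on `Hd`. -/
def eHB : HilbertBasis (Fin d → Finset ℕ) ℂ Hd :=
  HilbertBasis.mk (tbasisD_orthonormal htp) (tbasisD_dense htp)

lemma coe_eHB : ⇑(eHB htp) = tbasisD tpv := HilbertBasis.coe_mk _ _

end TP

section KB

variable {Hd : Type} [NormedAddCommGroup Hd] [InnerProductSpace ℂ Hd] [CompleteSpace Hd]
  (K : Hd ≃ₗᵢ[ℂ] ℋ)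

lemma bK_orthonormal : Orthonormal ℂ (fun σ => K.symm (Z σ)) := by
  rw [orthonormal_iff_ite]
  intro σ τ
  rw [LinearIsometryEquiv.inner_map_map]
  exact orthonormal_iff_ite.mp Z_orthonormal σ τ

lemma bK_dense :
    ⊤ ≤ (Submodule.span ℂ (Set.range fun σ => K.symm (Z σ))).topologicalClosure := by
  intro v _
  have hZd : Dense ((Submodule.span ℂ (Set.range Z) : Submodule ℂ ℋ) : Set ℋ) :=
    Submodule.dense_iff_topologicalClosure_eq_top.mpr (top_le_iff.mp Z_dense)
  have hKv : K v ∈ closure ((Submodule.span ℂ (Set.range Z) : Submodule ℂ ℋ) : Set ℋ) := hZd _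
  have himg : K.symm (K v)
      ∈ closure (⇑K.symm '' ((Submodule.span ℂ (Set.range Z) : Submodule ℂ ℋ) : Set ℋ)) :=
    image_closure_subset_closure_image K.symm.continuous (Set.mem_image_of_mem _ hKv)
  rw [LinearIsometryEquiv.symm_apply_apply] at himg
  have hsub : ⇑K.symm '' ((Submodule.span ℂ (Set.range Z) : Submodule ℂ ℋ) : Set ℋ)
      ⊆ ((Submodule.span ℂ (Set.range fun σ => K.symm (Z σ)) : Submodule ℂ Hd) : Set Hd) := by
    rintro _ ⟨w, hw, rfl⟩
    simp only [SetLike.mem_coe] at hw ⊢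
    induction hw using Submodule.span_induction with
    | mem w hw =>
      obtain ⟨σ, rfl⟩ := hw
      exact Submodule.subset_span ⟨σ, rfl⟩
    | zero => simp
    | add x y _ _ hx hy => rw [map_add]; exact Submodule.add_mem _ hx hy
    | smul c x _ hx => rw [map_smul]; exact Submodule.smul_mem _ _ hx
  have hfin : v ∈ closure
      ((Submodule.span ℂ (Set.range fun σ => K.symm (Z σ)) : Submodule ℂ Hd) : Set Hd) :=
    closure_mono hsub himg
  rwa [← SetLike.mem_coe, Submodule.topologicalClosure_coe]

/-- The image of the canonical basis under `K⁻¹`, as a Hilbert basis of `Hd`. -/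
def bKHB : HilbertBasis (Finset ℕ) ℂ Hd :=
  HilbertBasis.mk (bK_orthonormal K) (bK_dense K)

lemma coe_bKHB : ⇑(bKHB K) = fun σ => K.symm (Z σ) := HilbertBasis.coe_mk _ _

lemma adjoint_KCLM :
    ContinuousLinearMap.adjoint (K.toLinearIsometry.toContinuousLinearMap)
      = K.symm.toLinearIsometry.toContinuousLinearMap := by
  symm
  rw [ContinuousLinearMap.eq_adjoint_iff]
  intro x y
  simp only [LinearIsometry.coe_toContinuousLinearMap, LinearIsometryEquiv.coe_toLinearIsometry]
  rw [← LinearIsometryEquiv.inner_map_map K (K.symm x) y, LinearIsometryEquiv.apply_symm_apply]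

lemma adjoint_KsymmCLM :
    ContinuousLinearMap.adjoint (K.symm.toLinearIsometry.toContinuousLinearMap)
      = K.toLinearIsometry.toContinuousLinearMap := by
  symm
  rw [ContinuousLinearMap.eq_adjoint_iff]
  intro x y
  simp only [LinearIsometry.coe_toContinuousLinearMap, LinearIsometryEquiv.coe_toLinearIsometry]
  rw [← LinearIsometryEquiv.inner_map_map K x (K.symm y), LinearIsometryEquiv.apply_symm_apply]

lemma conjK_mul (A B : Hd →L[ℂ] Hd) : conjK K A * conjK K B = conjK K (A * B) := by
  unfold conjK
  ext v
  simp only [ContinuousLinearMap.mul_apply, ContinuousLinearMap.coe_comp', Function.comp_apply,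
    LinearIsometry.coe_toContinuousLinearMap, LinearIsometryEquiv.coe_toLinearIsometry]
  rw [LinearIsometryEquiv.symm_apply_apply]

lemma conjK_adjoint (T : Hd →L[ℂ] Hd) :
    ContinuousLinearMap.adjoint (conjK K T) = conjK K (ContinuousLinearMap.adjoint T) := by
  unfold conjK
  rw [ContinuousLinearMap.adjoint_comp, ContinuousLinearMap.adjoint_comp,
    adjoint_KCLM, adjoint_KsymmCLM]
  rfl

lemma nsq_conjK (T : Hd →L[ℂ] Hd) : nsq Z (conjK K T) = nsq (⇑(bKHB K)) T := by
  unfold nsq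
  refine tsum_congr fun σ => ?_
  have hb : (⇑(bKHB K)) σ = K.symm (Z σ) := congrFun (coe_bKHB K) σ
  have hnorm : ‖(conjK K T) (Z σ)‖ = ‖T (K.symm (Z σ))‖ := by
    simp only [conjK, ContinuousLinearMap.coe_comp', Function.comp_apply,
      LinearIsometry.coe_toContinuousLinearMap, LinearIsometryEquiv.coe_toLinearIsometry,
      LinearIsometry.norm_map, LinearIsometryEquiv.norm_map]
  rw [hnorm, hb]

end KB

/-! ### Self-adjointness of the basic operators -/

lemma adjoint_Bop (a : ℕ → ℋ →L[ℂ] ℋ) (n : ℕ) (e : ℤ) :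
    ContinuousLinearMap.adjoint (Bop a n e) = Bop a n e := by
  have hsmul : star ((2:ℂ)⁻¹) = (2:ℂ)⁻¹ := by
    simp [Complex.star_def, map_inv₀]
  have hsa : star (ContinuousLinearMap.adjoint (a n) + a n)
      = ContinuousLinearMap.adjoint (a n) + a n := by
    rw [star_add, ContinuousLinearMap.star_eq_adjoint, ContinuousLinearMap.star_eq_adjoint,
      ContinuousLinearMap.adjoint_adjoint, add_comm]
  unfold Bop Lop Rop
  split <;>
  · rw [← ContinuousLinearMap.star_eq_adjoint, star_smul, hsmul]
    congr 1
    first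
      | rw [star_sub, hsa, star_one]
      | rw [star_add, hsa, star_one]

/-! ### Path expansion of the one- and d-dimensional dynamics -/

def Dop (a : ℕ → ℋ →L[ℂ] ℋ) : ∀ n : ℕ, (Fin n → ℤ) → (ℋ →L[ℂ] ℋ)
  | 0, _ => 1
  | n + 1, q => Bop a n (q (Fin.last n)) * Dop a n (fun i => q i.castSucc)

def QF (n : ℕ) : Finset (Fin n → ℤ) := Fintype.piFinset fun _ => Lam

def PF (d n : ℕ) : Finset (Fin n → Fin d → ℤ) := Fintype.piFinset fun _ => LamD d

lemma Dop_succ (a : ℕ → ℋ →L[ℂ] ℋ) (n : ℕ) (q : Fin (n + 1) → ℤ) :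
    Dop a (n + 1) q = Bop a n (q (Fin.last n)) * Dop a n (fun i => q i.castSucc) := rfl

lemma Dop_snoc (a : ℕ → ℋ →L[ℂ] ℋ) (n : ℕ) (q : Fin n → ℤ) (e : ℤ) :
    Dop a (n + 1) (Fin.snoc q e) = Bop a n e * Dop a n q := by
  rw [Dop_succ]
  have h1 : (Fin.snoc q e : Fin (n + 1) → ℤ) (Fin.last n) = e := Fin.snoc_last _ _
  have h2 : (fun i : Fin n => (Fin.snoc q e : Fin (n + 1) → ℤ) i.castSucc) = q := by
    funext i
    exact Fin.snoc_castSucc _ _ _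
  rw [h1, h2]

lemma sum_snoc {n : ℕ} (q : Fin n → ℤ) (e : ℤ) :
    ∑ i, (Fin.snoc q e : Fin (n + 1) → ℤ) i = (∑ i, q i) + e := by
  rw [Fin.sum_univ_castSucc]
  congr 1
  · exact Finset.sum_congr rfl fun i _ => by rw [Fin.snoc_castSucc]
  · exact Fin.snoc_last _ _

lemma Jmap1_as_sum (a : ℕ → ℋ →L[ℂ] ℋ) (n : ℕ) (S : ℤ → ℋ →L[ℂ] ℋ) (x : ℤ) :
    Jmap1 a n S x = ∑ e ∈ Lam, Bop a n e * S (x - e) * Bop a n e := by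
  rw [Lam, Finset.sum_insert (by decide), Finset.sum_singleton]
  have h1 : Bop a n (-1) = Lop a n := if_pos rfl
  have h2 : Bop a n 1 = Rop a n := if_neg (by decide)
  rw [h1, h2, Jmap1, sub_neg_eq_add]

lemma seqJ_expand (a : ℕ → ℋ →L[ℂ] ℋ) (ρ : ℤ → ℋ →L[ℂ] ℋ) :
    ∀ n x, seqJ a ρ n x
      = ∑ q ∈ QF n, Dop a n q * ρ (x - ∑ i, q i) * ContinuousLinearMap.adjoint (Dop a n q) := by
  intro n
  induction n with
  | zero =>
    intro x
    have huniq : QF 0 = {fun i : Fin 0 => i.elim0} := by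
      apply Finset.eq_singleton_iff_unique_mem.mpr
      refine ⟨?_, fun q _ => funext fun i => i.elim0⟩
      rw [QF, Fintype.mem_piFinset]
      intro i
      exact i.elim0
    rw [huniq, Finset.sum_singleton]
    show ρ x = _
    have h1 : Dop a 0 (fun i : Fin 0 => i.elim0) = 1 := rfl
    rw [h1, ← ContinuousLinearMap.star_eq_adjoint, star_one]
    simp
  | succ n ih =>
    intro x
    show Jmap1 a n (seqJ a ρ n) x = _
    rw [Jmap1_as_sum]
    simp only [QF]
    rw [sum_piFinset_succ (M := ℋ →L[ℂ] ℋ) Lam n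
      (fun q => Dop a (n+1) q * ρ (x - ∑ i, q i) * ContinuousLinearMap.adjoint (Dop a (n+1) q))]
    refine Finset.sum_congr rfl fun e _ => ?_
    rw [ih]
    simp only [QF]
    rw [Finset.mul_sum, Finset.sum_mul]
    refine Finset.sum_congr rfl fun q _ => ?_
    rw [Dop_snoc, sum_snoc]
    have hadj : ContinuousLinearMap.adjoint (Bop a n e * Dop a n q)
        = ContinuousLinearMap.adjoint (Dop a n q) * Bop a n e := by
      rw [← ContinuousLinearMap.star_eq_adjoint, star_mul,
        ContinuousLinearMap.star_eq_adjoint, ContinuousLinearMap.star_eq_adjoint, adjoint_Bop]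
    rw [hadj]
    have harg : x - ((∑ i, q i) + e) = x - e - ∑ i, q i := by ring
    rw [harg]
    noncomm_ring

section Main

variable {d : ℕ} {Hd : Type} [NormedAddCommGroup Hd] [InnerProductSpace ℂ Hd] [CompleteSpace Hd]
  {tpv : MultilinearMap ℂ (fun _ : Fin d => ℋ) Hd}
  {tp : (Fin d → ℋ →L[ℂ] ℋ) → (Hd →L[ℂ] Hd)}

lemma snoc_coord {n : ℕ} (P : Fin n → Fin d → ℤ) (v : Fin d → ℤ) (j : Fin d) :
    (fun i => (Fin.snoc P v : Fin (n + 1) → Fin d → ℤ) i j)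
      = Fin.snoc (fun i => P i j) (v j) := by
  funext i
  refine Fin.lastCases ?_ ?_ i
  · simp
  · intro i'; simp

lemma adjoint_one : ContinuousLinearMap.adjoint (1 : ℋ →L[ℂ] ℋ) = 1 := by
  rw [← ContinuousLinearMap.star_eq_adjoint, star_one]

lemma omega_expand (htp : IsTensorD tpv tp) (a : ℕ → ℋ →L[ℂ] ℋ) (K : Hd ≃ₗᵢ[ℂ] ℋ)
    (ρ : Fin d → ℤ → ℋ →L[ℂ] ℋ) (ω : ℕ → (Fin d → ℤ) → ℋ →L[ℂ] ℋ)
    (hev : ∀ n : ℕ, ω (n + 1) = JmapD a tp K n (ω n))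
    (hinit : ∀ x : Fin d → ℤ, ω 0 x = conjK K (tp fun j => ρ j (x j))) :
    ∀ n x, ω n x = ∑ P ∈ PF d n, conjK K
      (tp (fun j => Dop a n (fun i => P i j))
        * tp (fun j => ρ j (x j - ∑ i, P i j))
        * tp (fun j => ContinuousLinearMap.adjoint (Dop a n (fun i => P i j)))) := by
  intro n
  induction n with
  | zero =>
    intro x
    have huniq : PF d 0 = {fun i : Fin 0 => i.elim0} := by
      apply Finset.eq_singleton_iff_unique_mem.mpr
      refine ⟨?_, fun q _ => funext fun i => i.elim0⟩
      rw [PF, Fintype.mem_piFinset]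
      intro i
      exact i.elim0
    rw [huniq, Finset.sum_singleton, hinit]
    have e1 : (fun j : Fin d => Dop a 0 (fun i : Fin 0 =>
        (fun i : Fin 0 => i.elim0 : Fin 0 → Fin d → ℤ) i j)) = fun _ => (1 : ℋ →L[ℂ] ℋ) := rfl
    have e2 : (fun j : Fin d => ContinuousLinearMap.adjoint (Dop a 0 (fun i : Fin 0 =>
        (fun i : Fin 0 => i.elim0 : Fin 0 → Fin d → ℤ) i j))) = fun _ => (1 : ℋ →L[ℂ] ℋ) := by
      funext j
      exact adjoint_one
    rw [e1, e2, tp_one htp, one_mul, mul_one]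
    have e3 : (fun j : Fin d => ρ j (x j - ∑ i : Fin 0,
        (fun i : Fin 0 => i.elim0 : Fin 0 → Fin d → ℤ) i j)) = fun j => ρ j (x j) := by
      funext j
      simp
    rw [e3]
  | succ n ih =>
    intro x
    rw [hev n]
    show ∑ v ∈ LamD d, Cop a tp K n v * ω n (x - v) * Cop a tp K n v = _
    simp only [PF]
    rw [sum_piFinset_succ (LamD d) n (fun P => conjK K
      (tp (fun j => Dop a (n + 1) (fun i => P i j))
        * tp (fun j => ρ j (x j - ∑ i, P i j))
        * tp (fun j => ContinuousLinearMap.adjoint (Dop a (n + 1) (fun i => P i j)))))]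
    refine Finset.sum_congr rfl fun v _ => ?_
    rw [ih]
    simp only [PF]
    rw [Finset.mul_sum, Finset.sum_mul]
    refine Finset.sum_congr rfl fun P _ => ?_
    have hC : Cop a tp K n v = conjK K (tp fun j => Bop a n (v j)) := rfl
    rw [hC, conjK_mul, conjK_mul]
    -- identify the new path data
    have hDnew : (fun j => Dop a (n + 1) (fun i => (Fin.snoc P v : Fin (n+1) → Fin d → ℤ) i j))
        = fun j => Bop a n (v j) * Dop a n (fun i => P i j) := by
      funext j
      rw [snoc_coord, Dop_snoc]
    have hadjnew : (fun j => ContinuousLinearMap.adjoint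
        (Dop a (n + 1) (fun i => (Fin.snoc P v : Fin (n+1) → Fin d → ℤ) i j)))
        = fun j => ContinuousLinearMap.adjoint (Dop a n (fun i => P i j)) * Bop a n (v j) := by
      funext j
      rw [snoc_coord, Dop_snoc, ← ContinuousLinearMap.star_eq_adjoint, star_mul,
        ContinuousLinearMap.star_eq_adjoint, ContinuousLinearMap.star_eq_adjoint, adjoint_Bop]
    have hxnew : (fun j => ρ j (x j - ∑ i,
        (Fin.snoc P v : Fin (n+1) → Fin d → ℤ) i j))
        = fun j => ρ j ((x - v) j - ∑ i, P i j) := by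
      funext j
      have : ∑ i, (Fin.snoc P v : Fin (n+1) → Fin d → ℤ) i j
          = (∑ i, P i j) + v j := by
        have hc := congrFun (congrArg (fun (f : Fin (n+1) → ℤ) => f) (snoc_coord P v j))
        calc ∑ i, (Fin.snoc P v : Fin (n+1) → Fin d → ℤ) i j
            = ∑ i, (Fin.snoc (fun i => P i j) (v j) : Fin (n+1) → ℤ) i := by
              rw [show (fun i => (Fin.snoc P v : Fin (n+1) → Fin d → ℤ) i j)
                = (Fin.snoc (fun i => P i j) (v j) : Fin (n+1) → ℤ) from snoc_coord P v j]
          _ = (∑ i, P i j) + v j := sum_snoc _ _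
      rw [this]
      have : x j - ((∑ i, P i j) + v j) = (x - v) j - ∑ i, P i j := by
        simp only [Pi.sub_apply]
        ring
      rw [this]
    rw [hDnew, hadjnew, hxnew]
    congr 1
    rw [← tp_mul htp, ← tp_mul htp]
    noncomm_ring

/-- `nsq` of a tensor operator in the tensor basis factorizes. -/
lemma nsq_tp (htp : IsTensorD tpv tp) (A : Fin d → ℋ →L[ℂ] ℋ) :
    nsq (⇑(eHB htp)) (tp A) = ∏ j, nsq Z (A j) := by
  unfold nsq
  rw [coe_eHB]
  have hterm : ∀ τ : Fin d → Finset ℕ, ENNReal.ofReal (‖tp A (tbasisD tpv τ)‖ ^ 2)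
      = ∏ j, ENNReal.ofReal (‖A j (Z (τ j))‖ ^ 2) := by
    intro τ
    rw [tbasisD, htp.2.2, norm_tpv_sq htp]
    exact ENNReal.ofReal_prod_of_nonneg fun j _ => sq_nonneg _
  rw [tsum_congr hterm]
  exact tsum_pi_prod (fun j σ => ENNReal.ofReal (‖A j (Z σ)‖ ^ 2))

lemma prod_sum_swap {n : ℕ} (t : Fin d → (Fin n → ℤ) → ℝ≥0∞) :
    ∑ P ∈ PF d n, ∏ j, t j (fun i => P i j) = ∏ j, ∑ q ∈ QF n, t j q := by
  rw [Finset.prod_univ_sum]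
  refine Finset.sum_bij' (fun P _ => fun j i => P i j) (fun g _ => fun i j => g j i)
    ?_ ?_ ?_ ?_ ?_
  · intro P hP
    simp only [PF, Fintype.mem_piFinset, LamD] at hP
    simp only [Fintype.mem_piFinset, QF]
    intro j i
    exact hP i j
  · intro g hg
    simp only [Fintype.mem_piFinset, QF] at hg
    simp only [PF, Fintype.mem_piFinset, LamD]
    intro i j
    exact hg j i
  · intro P _
    rfl
  · intro g _
    rfl
  · intro P _
    rfl

/-- The main computation. -/
theorem main (a : ℕ → ℋ →L[ℂ] ℋ)
    (htp : IsTensorD tpv tp) (K : Hd ≃ₗᵢ[ℂ] ℋ)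
    (ρ : Fin d → ℤ → ℋ →L[ℂ] ℋ) (hpos : ∀ j x, (ρ j x).IsPositive)
    (ω : ℕ → (Fin d → ℤ) → ℋ →L[ℂ] ℋ)
    (hev : ∀ n : ℕ, ω (n + 1) = JmapD a tp K n (ω n))
    (hinit : ∀ x : Fin d → ℤ, ω 0 x = conjK K (tp fun j => ρ j (x j))) :
    ∀ (n : ℕ) (x : Fin d → ℤ),
      trH (ω n x) = ∏ j : Fin d, trH (seqJ a (ρ j) n (x j)) := by
  intro n x
  classical
  -- square roots of the initial states at the relevant sites
  have hsq : ∀ (j : Fin d) (q : Fin n → ℤ), ∃ sq : ℋ →L[ℂ] ℋ,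
      ContinuousLinearMap.adjoint sq = sq ∧ sq * sq = ρ j (x j - ∑ i, q i) :=
    fun j q => exists_sqrt _ (hpos j _)
  choose sq hs1 hs2 using hsq
  -- the right-hand side, coordinatewise
  have hRHS : ∀ j : Fin d, trH (seqJ a (ρ j) n (x j))
      = (∑ q ∈ QF n, nsq Z (Dop a n q * sq j q)).toReal := by
    intro j
    have h1 : seqJ a (ρ j) n (x j) = ∑ q ∈ QF n,
        (Dop a n q * sq j q) * ContinuousLinearMap.adjoint (Dop a n q * sq j q) := by
      rw [seqJ_expand]
      refine Finset.sum_congr rfl fun q _ => ?_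
      rw [← hs2 j q]
      have hadj : ContinuousLinearMap.adjoint (Dop a n q * sq j q)
          = sq j q * ContinuousLinearMap.adjoint (Dop a n q) := by
        rw [← ContinuousLinearMap.star_eq_adjoint, star_mul,
          ContinuousLinearMap.star_eq_adjoint, ContinuousLinearMap.star_eq_adjoint, hs1]
      rw [hadj]
      noncomm_ring
    show trB Z _ = _
    rw [h1, ← coe_ZHB, trB_sum_ww ZHB]
    congr 1
    refine Finset.sum_congr rfl fun q _ => ?_
    rw [nsq_adjoint ZHB ZHB, coe_ZHB]
  -- the left-hand side, as a sum of `W W*`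
  have hW : ω n x = ∑ P ∈ PF d n,
      conjK K (tp fun j => Dop a n (fun i => P i j) * sq j (fun i => P i j))
        * ContinuousLinearMap.adjoint
          (conjK K (tp fun j => Dop a n (fun i => P i j) * sq j (fun i => P i j))) := by
    rw [omega_expand htp a K ρ ω hev hinit n x]
    refine Finset.sum_congr rfl fun P _ => ?_
    have hadj : (fun j => ContinuousLinearMap.adjoint
          (Dop a n (fun i => P i j) * sq j (fun i => P i j)))
        = fun j => sq j (fun i => P i j)
            * ContinuousLinearMap.adjoint (Dop a n (fun i => P i j)) := by
      funext j
      rw [← ContinuousLinearMap.star_eq_adjoint, star_mul,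
        ContinuousLinearMap.star_eq_adjoint, ContinuousLinearMap.star_eq_adjoint, hs1]
    have hρeq : (fun j => ρ j (x j - ∑ i, P i j))
        = fun j => sq j (fun i => P i j) * sq j (fun i => P i j) := by
      funext j
      rw [hs2]
    conv_rhs => rw [conjK_adjoint, tp_adjoint htp, hadj, conjK_mul, tp_mul htp]
    conv_lhs => rw [hρeq, tp_mul htp, tp_mul htp]
    exact congrArg (conjK K) (congrArg tp (funext fun j => by noncomm_ring))
  -- trace computation
  have hLHS : trH (ω n x) = (∑ P ∈ PF d n,
      ∏ j, nsq Z (Dop a n (fun i => P i j) * sq j (fun i => P i j))).toReal := by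
    show trB Z _ = _
    rw [hW, ← coe_ZHB, trB_sum_ww ZHB]
    congr 1
    refine Finset.sum_congr rfl fun P _ => ?_
    rw [coe_ZHB, conjK_adjoint, nsq_conjK,
      nsq_adjoint (bKHB K) (eHB htp), nsq_tp htp]
  rw [hLHS, prod_sum_swap (fun j q => nsq Z (Dop a n q * sq j q)), ENNReal.toReal_prod]
  refine Finset.prod_congr rfl fun j _ => ?_
  exact (hRHS j).symm

end Main

end Stmt13Aux
/-- If the initial nucleus factorizes through 1-dimensional nucleuses `ρ_j⁽⁰⁾`, then at every
time `n ≥ 1` the probability distribution of the walk factorizes: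
`Tr[ω⁽ⁿ⁾(x)] = ∏_j Tr[ρ_j⁽ⁿ⁾(x_j)]` with `ρ_j⁽ⁿ⁾ = (𝔍_{n-1} ∘ ⋯ ∘ 𝔍_0) ρ_j⁽⁰⁾`. -/
theorem stmt13 (a : ℕ → ℋ →L[ℂ] ℋ) (ha : QBN a)
    (d : ℕ) (hd : 2 ≤ d)
    (Hd : Type) [NormedAddCommGroup Hd] [InnerProductSpace ℂ Hd] [CompleteSpace Hd]
    (tpv : MultilinearMap ℂ (fun _ : Fin d => ℋ) Hd)
    (tp : (Fin d → ℋ →L[ℂ] ℋ) → (Hd →L[ℂ] Hd))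
    (htp : IsTensorD tpv tp)
    (K : Hd ≃ₗᵢ[ℂ] ℋ)
    (ρ : Fin d → ℤ → ℋ →L[ℂ] ℋ) (hρ : ∀ j, IsNucleusOn Z (ρ j))
    (ω : ℕ → (Fin d → ℤ) → ℋ →L[ℂ] ℋ)
    (hev : ∀ n : ℕ, ω (n + 1) = JmapD a tp K n (ω n))
    (hinit : ∀ x : Fin d → ℤ, ω 0 x = conjK K (tp fun j => ρ j (x j))) :
    ∀ n : ℕ, 1 ≤ n → ∀ x : Fin d → ℤ,
      trH (ω n x) = ∏ j : Fin d, trH (seqJ a (ρ j) n (x j)) := by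
  intro n _ x
  exact Stmt13Aux.main a htp K ρ (fun j y => (hρ j).1 y) ω hev hinit n x
end
end

section
/- Fix σ ∈ Γ, let ρ_σ be the 1-dimensional nucleus with ρ_σ(0) = |Z_σ⟩⟨Z_σ| and ρ_σ(x) = 0 for x ≠ 0, and let ρ^{(0)} = ρ_σ, ρ^{(n+1)} = 𝔍_n ρ^{(n)} for n ≥ 0. Then for every n ≥ 1 and x ∈ ℤ one has Tr[ρ^{(n)}(x)] = 2^{−n}·C(n, j) if x = n − 2j for some integer j with 0 ≤ j ≤ n, and Tr[ρ^{(n)}(x)] = 0 otherwise, where C(n, j) denotes the binomial coefficient. -/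
/- Common setup: quantum Bernoulli noises on `ℋ = ℓ²(Γ)`, `Γ` = finite subsets of `ℕ`. -/

noncomputable section

open ContinuousLinearMap Filter

/-! ### Auxiliary development -/

local notation "⟪" x ", " y "⟫" => @inner ℂ _ _ x y

lemma inner_Z (τ τ' : Finset ℕ) : ⟪Z τ, Z τ'⟫ = if τ = τ' then 1 else 0 := by
  rw [Z, Z, lp.inner_single_left, lp.single_apply]
  split_ifs with h
  · simp [Pi.single_apply, h]
  · simp [Pi.single_apply, h]

/-- flip membership of `n` -/
def flipF (n : ℕ) (τ : Finset ℕ) : Finset ℕ := if n ∈ τ then τ.erase n else insert n τ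

lemma flipF_flipF (n : ℕ) (τ : Finset ℕ) : flipF n (flipF n τ) = τ := by
  unfold flipF
  by_cases h : n ∈ τ <;> simp [h, Finset.insert_erase, Finset.erase_insert]

lemma mem_flipF_of_ne {m n : ℕ} (h : m ≠ n) (τ : Finset ℕ) : m ∈ flipF n τ ↔ m ∈ τ := by
  unfold flipF
  by_cases hn : n ∈ τ <;> simp [hn, h, Finset.mem_erase, Finset.mem_insert]

lemma n_mem_flipF (n : ℕ) (τ : Finset ℕ) : n ∈ flipF n τ ↔ ¬ n ∈ τ := by
  unfold flipF
  by_cases hn : n ∈ τ <;> simp [hn]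

lemma flipF_involutive (n : ℕ) : Function.Involutive (flipF n) := fun τ => flipF_flipF n τ

/-- flip as an Equiv -/
def flipE (n : ℕ) : Equiv (Finset ℕ) (Finset ℕ) :=
  ⟨flipF n, flipF n, flipF_flipF n, flipF_flipF n⟩

lemma S_apply {a : ℕ → ℋ →L[ℂ] ℋ} (ha : QBN a) (n : ℕ) (τ : Finset ℕ) :
    (ContinuousLinearMap.adjoint (a n) + a n) (Z τ) = Z (flipF n τ) := by
  have h1 := ha.1 n τ
  have h2 := ha.2 n τ
  by_cases hn : n ∈ τ <;>
    simp [ContinuousLinearMap.add_apply, h1, h2, hn, flipF]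

lemma Lop_apply {a : ℕ → ℋ →L[ℂ] ℋ} (ha : QBN a) (n : ℕ) (τ : Finset ℕ) :
    Lop a n (Z τ) = (2:ℂ)⁻¹ • (Z (flipF n τ) - Z τ) := by
  rw [Lop]
  simp only [ContinuousLinearMap.smul_apply, ContinuousLinearMap.sub_apply,
    ContinuousLinearMap.one_apply]
  rw [S_apply ha]

lemma Rop_apply {a : ℕ → ℋ →L[ℂ] ℋ} (ha : QBN a) (n : ℕ) (τ : Finset ℕ) :
    Rop a n (Z τ) = (2:ℂ)⁻¹ • (Z (flipF n τ) + Z τ) := by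
  have hS := S_apply ha n τ
  simp only [ContinuousLinearMap.add_apply] at hS
  rw [Rop]
  simp only [ContinuousLinearMap.smul_apply, ContinuousLinearMap.add_apply,
    ContinuousLinearMap.one_apply, ← hS]

lemma Lop_selfAdjoint {a : ℕ → ℋ →L[ℂ] ℋ} (n : ℕ) (u w : ℋ) :
    ⟪u, Lop a n w⟫ = ⟪Lop a n u, w⟫ := by
  rw [Lop]
  simp only [ContinuousLinearMap.smul_apply, ContinuousLinearMap.sub_apply,
    ContinuousLinearMap.add_apply, ContinuousLinearMap.one_apply]
  rw [inner_smul_right, inner_smul_left]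
  rw [inner_sub_right, inner_sub_left, inner_add_right, inner_add_left]
  rw [ContinuousLinearMap.adjoint_inner_right, ContinuousLinearMap.adjoint_inner_left]
  rw [map_inv₀, map_ofNat]
  ring

lemma Rop_selfAdjoint {a : ℕ → ℋ →L[ℂ] ℋ} (n : ℕ) (u w : ℋ) :
    ⟪u, Rop a n w⟫ = ⟪Rop a n u, w⟫ := by
  rw [Rop]
  simp only [ContinuousLinearMap.smul_apply, ContinuousLinearMap.add_apply,
    ContinuousLinearMap.one_apply]
  rw [inner_smul_right, inner_smul_left]
  rw [inner_add_right, inner_add_left, inner_add_right, inner_add_left]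
  rw [ContinuousLinearMap.adjoint_inner_right, ContinuousLinearMap.adjoint_inner_left]
  rw [map_inv₀, map_ofNat]
  ring

lemma dyad_apply (u v w : ℋ) : dyad u v w = ⟪v, w⟫ • u := rfl

/-- Representation of an operator as a finite combination of basis dyads, with all
dyad pairs agreeing on modes `≥ n`. -/
def RepC (n : ℕ) (I : Finset (Finset ℕ × Finset ℕ)) (c : Finset ℕ × Finset ℕ → ℂ)
    (T : ℋ →L[ℂ] ℋ) : Prop :=
  (∀ p ∈ I, ∀ m, n ≤ m → (m ∈ p.1 ↔ m ∈ p.2)) ∧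
  T = ∑ p ∈ I, c p • dyad (Z p.1) (Z p.2)

def RepD (n : ℕ) (T : ℋ →L[ℂ] ℋ) : Prop := ∃ I c, RepC n I c T

lemma matel {n I c T} (h : RepC n I c T) (ρ τ : Finset ℕ) :
    ⟪Z ρ, T (Z τ)⟫ = if (ρ, τ) ∈ I then c (ρ, τ) else 0 := by
  rw [h.2]
  simp only [ContinuousLinearMap.sum_apply, ContinuousLinearMap.smul_apply, dyad_apply,
    inner_Z, inner_sum, inner_smul_right]
  rw [Finset.sum_congr rfl (g := fun p => if p = (ρ, τ) then c p else 0) ?_]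
  · exact Finset.sum_ite_eq' I (ρ, τ) c
  · intro p _
    by_cases hp : p = (ρ, τ)
    · subst hp; simp
    · rw [if_neg hp]
      have hor : ¬(p.2 = τ) ∨ ¬(ρ = p.1) := by
        by_contra hc
        push_neg at hc
        exact hp (Prod.ext hc.2.symm hc.1)
      rcases hor with h1 | h1 <;> simp [h1]

lemma rep_cross {n I c T} (h : RepC n I c T) (τ : Finset ℕ) :
    ⟪Z (flipF n τ), T (Z τ)⟫ = 0 := by
  rw [matel h]
  rw [if_neg]
  intro hmem
  have := (h.1 _ hmem n le_rfl)
  simp only at this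
  rw [n_mem_flipF] at this
  tauto

lemma summable_diag {n I c T} (h : RepC n I c T) :
    Summable (fun τ => (⟪Z τ, T (Z τ)⟫).re) := by
  apply summable_of_ne_finset_zero (s := I.image Prod.fst)
  intro τ hτ
  rw [matel h, if_neg, Complex.zero_re]
  intro hmem
  exact hτ (Finset.mem_image_of_mem Prod.fst hmem)

lemma rep_summable {n T} (h : RepD n T) : Summable (fun τ => (⟪Z τ, T (Z τ)⟫).re) := by
  obtain ⟨I, c, hc⟩ := h; exact summable_diag hc

lemma trH_eq (T : ℋ →L[ℂ] ℋ) : trH T = ∑' τ, (⟪Z τ, T (Z τ)⟫).re := rfl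

lemma trH_add {T₁ T₂ : ℋ →L[ℂ] ℋ} (h₁ : Summable (fun τ => (⟪Z τ, T₁ (Z τ)⟫).re))
    (h₂ : Summable (fun τ => (⟪Z τ, T₂ (Z τ)⟫).re)) :
    trH (T₁ + T₂) = trH T₁ + trH T₂ := by
  rw [trH_eq, trH_eq, trH_eq, ← Summable.tsum_add h₁ h₂]
  apply tsum_congr
  intro τ
  simp [ContinuousLinearMap.add_apply, inner_add_right]

lemma rep_zero (n : ℕ) : RepD n (0 : ℋ →L[ℂ] ℋ) :=
  ⟨∅, fun _ => 0, by simp, by simp⟩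

lemma rep_add {n : ℕ} {T T' : ℋ →L[ℂ] ℋ} (h : RepD n T) (h' : RepD n T') :
    RepD n (T + T') := by
  obtain ⟨I, c, hI, hT⟩ := h
  obtain ⟨I', c', hI', hT'⟩ := h'
  refine ⟨I ∪ I', fun q => (if q ∈ I then c q else 0) + (if q ∈ I' then c' q else 0), ?_, ?_⟩
  · intro p hp m hm
    rcases Finset.mem_union.1 hp with hp | hp
    · exact hI p hp m hm
    · exact hI' p hp m hm
  · rw [hT, hT']
    simp only [add_smul, Finset.sum_add_distrib, ite_smul, zero_smul]
    rw [Finset.sum_ite_mem, Finset.sum_ite_mem, Finset.union_inter_cancel_left,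
      Finset.union_inter_cancel_right]

lemma rep_neg {n : ℕ} {T : ℋ →L[ℂ] ℋ} (h : RepD n T) : RepD n (-T) := by
  obtain ⟨I, c, hI, hT⟩ := h
  exact ⟨I, fun q => -c q, hI, by rw [hT]; simp [Finset.sum_neg_distrib]⟩

lemma rep_sum_image {n : ℕ} {I : Finset (Finset ℕ × Finset ℕ)} (c : Finset ℕ × Finset ℕ → ℂ)
    (hI : ∀ p ∈ I, ∀ m, n ≤ m → (m ∈ p.1 ↔ m ∈ p.2))
    (e e' : Finset ℕ → Finset ℕ) (he : Function.Involutive e) (he' : Function.Involutive e')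
    (hm : ∀ m, n + 1 ≤ m → ∀ τ, (m ∈ e τ ↔ m ∈ τ))
    (hm' : ∀ m, n + 1 ≤ m → ∀ τ, (m ∈ e' τ ↔ m ∈ τ)) :
    RepD (n + 1) (∑ p ∈ I, c p • dyad (Z (e p.1)) (Z (e' p.2))) := by
  refine ⟨I.image (fun p => (e p.1, e' p.2)), fun q => c (e q.1, e' q.2), ?_, ?_⟩
  · intro q hq m hmge
    obtain ⟨p, hp, rfl⟩ := Finset.mem_image.1 hq
    rw [hm m hmge, hm' m hmge]
    exact hI p hp m (le_trans (Nat.le_succ n) hmge)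
  · rw [Finset.sum_image]
    · apply Finset.sum_congr rfl
      intro p _
      simp [he p.1, he' p.2]
    · intro p _ q _ hpq
      have h1 : e p.1 = e q.1 := congrArg Prod.fst hpq
      have h2 : e' p.2 = e' q.2 := congrArg Prod.snd hpq
      exact Prod.ext (he.injective h1) (he'.injective h2)

lemma L_conj_dyad {a : ℕ → ℋ →L[ℂ] ℋ} (ha : QBN a) (n : ℕ) (α β : Finset ℕ) :
    Lop a n * dyad (Z α) (Z β) * Lop a n
      = (4:ℂ)⁻¹ • (dyad (Z (flipF n α)) (Z (flipF n β)) - dyad (Z (flipF n α)) (Z β)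
          - dyad (Z α) (Z (flipF n β)) + dyad (Z α) (Z β)) := by
  refine ContinuousLinearMap.ext fun w => ?_
  simp only [ContinuousLinearMap.mul_apply, ContinuousLinearMap.smul_apply,
    ContinuousLinearMap.add_apply, ContinuousLinearMap.sub_apply, dyad_apply]
  rw [Lop_selfAdjoint, Lop_apply ha, map_smul, Lop_apply ha]
  rw [inner_smul_left, inner_sub_left, map_inv₀, map_ofNat]
  simp only [smul_sub, smul_smul, sub_smul, smul_add]
  module

lemma R_conj_dyad {a : ℕ → ℋ →L[ℂ] ℋ} (ha : QBN a) (n : ℕ) (α β : Finset ℕ) :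
    Rop a n * dyad (Z α) (Z β) * Rop a n
      = (4:ℂ)⁻¹ • (dyad (Z (flipF n α)) (Z (flipF n β)) + dyad (Z (flipF n α)) (Z β)
          + dyad (Z α) (Z (flipF n β)) + dyad (Z α) (Z β)) := by
  refine ContinuousLinearMap.ext fun w => ?_
  simp only [ContinuousLinearMap.mul_apply, ContinuousLinearMap.smul_apply,
    ContinuousLinearMap.add_apply, dyad_apply]
  rw [Rop_selfAdjoint, Rop_apply ha, map_smul, Rop_apply ha]
  rw [inner_smul_left, inner_add_left, map_inv₀, map_ofNat]
  simp only [smul_add, smul_smul, add_smul]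
  module

lemma rep_L {a : ℕ → ℋ →L[ℂ] ℋ} (ha : QBN a) {n I c T} (h : RepC n I c T) :
    RepD (n + 1) (Lop a n * T * Lop a n) := by
  have hflip : ∀ m, n + 1 ≤ m → ∀ τ, (m ∈ flipF n τ ↔ m ∈ τ) := fun m hm τ =>
    mem_flipF_of_ne (by omega) τ
  have hid : ∀ m, n + 1 ≤ m → ∀ τ, (m ∈ id τ ↔ m ∈ (id τ : Finset ℕ)) := fun _ _ _ => Iff.rfl
  have expand : Lop a n * T * Lop a n
      = (∑ p ∈ I, (c p * (4:ℂ)⁻¹) • dyad (Z (flipF n p.1)) (Z (flipF n p.2)))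
        + (-(∑ p ∈ I, (c p * (4:ℂ)⁻¹) • dyad (Z (flipF n p.1)) (Z (id p.2))))
        + (-(∑ p ∈ I, (c p * (4:ℂ)⁻¹) • dyad (Z (id p.1)) (Z (flipF n p.2))))
        + (∑ p ∈ I, (c p * (4:ℂ)⁻¹) • dyad (Z (id p.1)) (Z (id p.2))) := by
    rw [h.2, Finset.mul_sum, Finset.sum_mul]
    rw [← Finset.sum_neg_distrib, ← Finset.sum_neg_distrib, ← Finset.sum_add_distrib,
      ← Finset.sum_add_distrib, ← Finset.sum_add_distrib]
    apply Finset.sum_congr rfl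
    intro p _
    rw [mul_smul_comm, smul_mul_assoc, L_conj_dyad ha]
    simp only [id_eq, smul_sub, smul_add, smul_smul]
    abel
  rw [expand]
  have hfinv := flipF_involutive n
  have hidinv : Function.Involutive (id : Finset ℕ → Finset ℕ) := fun _ => rfl
  exact rep_add (rep_add (rep_add
    (rep_sum_image _ h.1 _ _ hfinv hfinv hflip hflip)
    (rep_neg (rep_sum_image _ h.1 _ _ hfinv hidinv hflip hid)))
    (rep_neg (rep_sum_image _ h.1 _ _ hidinv hfinv hid hflip)))
    (rep_sum_image _ h.1 _ _ hidinv hidinv hid hid)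

lemma rep_R {a : ℕ → ℋ →L[ℂ] ℋ} (ha : QBN a) {n I c T} (h : RepC n I c T) :
    RepD (n + 1) (Rop a n * T * Rop a n) := by
  have hflip : ∀ m, n + 1 ≤ m → ∀ τ, (m ∈ flipF n τ ↔ m ∈ τ) := fun m hm τ =>
    mem_flipF_of_ne (by omega) τ
  have hid : ∀ m, n + 1 ≤ m → ∀ τ, (m ∈ id τ ↔ m ∈ (id τ : Finset ℕ)) := fun _ _ _ => Iff.rfl
  have expand : Rop a n * T * Rop a n
      = (∑ p ∈ I, (c p * (4:ℂ)⁻¹) • dyad (Z (flipF n p.1)) (Z (flipF n p.2)))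
        + (∑ p ∈ I, (c p * (4:ℂ)⁻¹) • dyad (Z (flipF n p.1)) (Z (id p.2)))
        + (∑ p ∈ I, (c p * (4:ℂ)⁻¹) • dyad (Z (id p.1)) (Z (flipF n p.2)))
        + (∑ p ∈ I, (c p * (4:ℂ)⁻¹) • dyad (Z (id p.1)) (Z (id p.2))) := by
    rw [h.2, Finset.mul_sum, Finset.sum_mul]
    rw [← Finset.sum_add_distrib, ← Finset.sum_add_distrib, ← Finset.sum_add_distrib]
    apply Finset.sum_congr rfl
    intro p _
    rw [mul_smul_comm, smul_mul_assoc, R_conj_dyad ha]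
    simp only [id_eq, smul_add, smul_smul]
  rw [expand]
  have hfinv := flipF_involutive n
  have hidinv : Function.Involutive (id : Finset ℕ → Finset ℕ) := fun _ => rfl
  exact rep_add (rep_add (rep_add
    (rep_sum_image _ h.1 _ _ hfinv hfinv hflip hflip)
    (rep_sum_image _ h.1 _ _ hfinv hidinv hflip hid))
    (rep_sum_image _ h.1 _ _ hidinv hfinv hid hflip))
    (rep_sum_image _ h.1 _ _ hidinv hidinv hid hid)

lemma re_quarter (z w : ℂ) : ((4:ℂ)⁻¹ * (z + w)).re = z.re / 4 + w.re / 4 := by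
  have h4 : (4:ℂ)⁻¹ = ((4⁻¹ : ℝ) : ℂ) := by norm_num
  rw [h4, Complex.re_ofReal_mul, Complex.add_re]
  ring

lemma trH_L {a : ℕ → ℋ →L[ℂ] ℋ} (ha : QBN a) {n I c T} (h : RepC n I c T) :
    trH (Lop a n * T * Lop a n) = trH T / 2 := by
  have key : ∀ τ, ⟪Z τ, (Lop a n * T * Lop a n) (Z τ)⟫
      = (4:ℂ)⁻¹ * (⟪Z (flipF n τ), T (Z (flipF n τ))⟫ + ⟪Z τ, T (Z τ)⟫) := by
    intro τ
    rw [ContinuousLinearMap.mul_apply, ContinuousLinearMap.mul_apply, Lop_selfAdjoint,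
      Lop_apply ha, map_smul, map_sub, inner_smul_left, inner_smul_right,
      inner_sub_left, inner_sub_right, inner_sub_right]
    have c1 := rep_cross h τ
    have c2 := rep_cross h (flipF n τ)
    rw [flipF_flipF] at c2
    rw [c1, c2, map_inv₀, map_ofNat]
    ring
  have hsum := summable_diag h
  have hcomp : Summable (fun τ => (⟪Z (flipF n τ), T (Z (flipF n τ))⟫).re / 4) :=
    (((flipE n).summable_iff (f := fun τ => (⟪Z τ, T (Z τ)⟫).re)).2 hsum).div_const 4
  rw [trH_eq, trH_eq]
  rw [tsum_congr (fun τ => by rw [key τ, re_quarter])]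
  rw [Summable.tsum_add hcomp (hsum.div_const 4), tsum_div_const, tsum_div_const]
  have ht : (∑' τ, (⟪Z (flipF n τ), T (Z (flipF n τ))⟫).re) = ∑' τ, (⟪Z τ, T (Z τ)⟫).re := by
    simpa [flipE] using (flipE n).tsum_eq (fun τ => (⟪Z τ, T (Z τ)⟫).re)
  rw [ht]
  ring

lemma trH_R {a : ℕ → ℋ →L[ℂ] ℋ} (ha : QBN a) {n I c T} (h : RepC n I c T) :
    trH (Rop a n * T * Rop a n) = trH T / 2 := by
  have key : ∀ τ, ⟪Z τ, (Rop a n * T * Rop a n) (Z τ)⟫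
      = (4:ℂ)⁻¹ * (⟪Z (flipF n τ), T (Z (flipF n τ))⟫ + ⟪Z τ, T (Z τ)⟫) := by
    intro τ
    rw [ContinuousLinearMap.mul_apply, ContinuousLinearMap.mul_apply, Rop_selfAdjoint,
      Rop_apply ha, map_smul, map_add, inner_smul_left, inner_smul_right,
      inner_add_left, inner_add_right, inner_add_right]
    have c1 := rep_cross h τ
    have c2 := rep_cross h (flipF n τ)
    rw [flipF_flipF] at c2
    rw [c1, c2, map_inv₀, map_ofNat]
    ring
  have hsum := summable_diag h
  have hcomp : Summable (fun τ => (⟪Z (flipF n τ), T (Z (flipF n τ))⟫).re / 4) :=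
    (((flipE n).summable_iff (f := fun τ => (⟪Z τ, T (Z τ)⟫).re)).2 hsum).div_const 4
  rw [trH_eq, trH_eq]
  rw [tsum_congr (fun τ => by rw [key τ, re_quarter])]
  rw [Summable.tsum_add hcomp (hsum.div_const 4), tsum_div_const, tsum_div_const]
  have ht : (∑' τ, (⟪Z (flipF n τ), T (Z (flipF n τ))⟫).re) = ∑' τ, (⟪Z τ, T (Z τ)⟫).re := by
    simpa [flipE] using (flipE n).tsum_eq (fun τ => (⟪Z τ, T (Z τ)⟫).re)
  rw [ht]
  ring

/-- The trace profile recursion. -/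
def tfun : ℕ → ℤ → ℝ
  | 0, x => if x = 0 then 1 else 0
  | n+1, x => (tfun n (x+1) + tfun n (x-1)) / 2

lemma main_ind {a : ℕ → ℋ →L[ℂ] ℋ} (ha : QBN a) (σ : Finset ℕ) :
    ∀ n x, RepD n (seqJ a (rhoPoint σ) n x) ∧ trH (seqJ a (rhoPoint σ) n x) = tfun n x := by
  intro n
  induction n with
  | zero =>
    intro x
    show RepD 0 (rhoPoint σ x) ∧ trH (rhoPoint σ x) = tfun 0 x
    by_cases hx : x = 0
    · subst hx
      constructor
      · refine ⟨{(σ, σ)}, fun _ => 1, ?_, ?_⟩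
        · intro p hp m _
          rw [Finset.mem_singleton] at hp
          subst hp
          rfl
        · simp [rhoPoint]
      · have hrho : rhoPoint σ 0 = dyad (Z σ) (Z σ) := by simp [rhoPoint]
        rw [hrho, trH_eq]
        have hdiag : ∀ τ : Finset ℕ, (⟪Z τ, dyad (Z σ) (Z σ) (Z τ)⟫).re
            = if τ = σ then 1 else 0 := by
          intro τ
          rw [dyad_apply, inner_smul_right, inner_Z, inner_Z]
          by_cases h : τ = σ
          · subst h; simp
          · simp [h, Ne.symm h]
        rw [tsum_congr hdiag, tsum_ite_eq σ (fun _ => (1:ℝ))]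
        simp [tfun]
    · constructor
      · simpa [rhoPoint, hx] using rep_zero 0
      · simp [rhoPoint, hx, tfun, trH_eq]
  | succ n ih =>
    intro x
    obtain ⟨I₁, c₁, h₁⟩ := (ih (x + 1)).1
    obtain ⟨I₂, c₂, h₂⟩ := (ih (x - 1)).1
    have hseq : seqJ a (rhoPoint σ) (n + 1) x
        = Lop a n * seqJ a (rhoPoint σ) n (x + 1) * Lop a n
          + Rop a n * seqJ a (rhoPoint σ) n (x - 1) * Rop a n := rfl
    have hL := rep_L ha h₁
    have hR := rep_R ha h₂
    constructor
    · rw [hseq]; exact rep_add hL hR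
    · rw [hseq, trH_add (rep_summable hL) (rep_summable hR), trH_L ha h₁, trH_R ha h₂,
        (ih (x + 1)).2, (ih (x - 1)).2]
      show tfun n (x + 1) / 2 + tfun n (x - 1) / 2 = tfun (n + 1) x
      rw [tfun]
      ring

lemma tfun_spec : ∀ n : ℕ,
    (∀ j : ℕ, j ≤ n → tfun n ((n : ℤ) - 2 * (j : ℤ)) = (n.choose j : ℝ) / 2 ^ n) ∧
    (∀ x : ℤ, (∀ j : ℕ, j ≤ n → x ≠ (n : ℤ) - 2 * (j : ℤ)) → tfun n x = 0) := by
  intro n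
  induction n with
  | zero =>
    constructor
    · intro j hj
      interval_cases j
      simp [tfun]
    · intro x hx
      have h0 := hx 0 le_rfl
      simp only [Nat.cast_zero] at h0
      have : x ≠ 0 := by omega
      simp [tfun, this]
  | succ n ih =>
    have hzero : ∀ x : ℤ, (∀ j : ℕ, j ≤ n → x ≠ (n : ℤ) - 2 * (j : ℤ)) → tfun n x = 0 := ih.2
    have hval : ∀ j : ℕ, j ≤ n + 1 → tfun n ((n : ℤ) - 2 * (j : ℤ)) = (n.choose j : ℝ) / 2 ^ n := by
      intro j hj
      rcases Nat.lt_or_ge j (n + 1) with h | h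
      · exact ih.1 j (by omega)
      · have hj' : j = n + 1 := by omega
        subst hj'
        rw [hzero _ (by intro j' hj' hne; omega), Nat.choose_succ_self]
        simp
    constructor
    · intro j hj
      rw [tfun]
      rcases Nat.eq_zero_or_pos j with rfl | hjpos
      · -- j = 0 : x = n+1, x+1 = n+2 is out of range, x-1 = n
        have h1 : tfun n ((↑(n + 1) - 2 * ((0:ℕ) : ℤ)) + 1) = 0 := by
          apply hzero
          intro j' hj' hne
          omega
        have h2 : tfun n ((↑(n + 1) - 2 * ((0:ℕ) : ℤ)) - 1) = (n.choose 0 : ℝ) / 2 ^ n := by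
          have harg : (↑(n + 1) - 2 * ((0:ℕ) : ℤ)) - 1 = (n : ℤ) - 2 * ((0:ℕ) : ℤ) := by
            push_cast; ring
          rw [harg]
          exact hval 0 (by omega)
        rw [h1, h2]
        simp [pow_succ]
        ring
      · -- j ≥ 1
        obtain ⟨k, rfl⟩ : ∃ k, j = k + 1 := ⟨j - 1, by omega⟩
        have h1 : tfun n ((↑(n + 1) - 2 * ((k + 1 : ℕ) : ℤ)) + 1) = (n.choose k : ℝ) / 2 ^ n := by
          have harg : (↑(n + 1) - 2 * ((k + 1 : ℕ) : ℤ)) + 1 = (n : ℤ) - 2 * ((k : ℕ) : ℤ) := by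
            push_cast; ring
          rw [harg]
          exact hval k (by omega)
        have h2 : tfun n ((↑(n + 1) - 2 * ((k + 1 : ℕ) : ℤ)) - 1)
            = (n.choose (k + 1) : ℝ) / 2 ^ n := by
          have harg : (↑(n + 1) - 2 * ((k + 1 : ℕ) : ℤ)) - 1 = (n : ℤ) - 2 * ((k + 1 : ℕ) : ℤ) := by
            push_cast; ring
          rw [harg]
          exact hval (k + 1) (by omega)
        rw [h1, h2, Nat.choose_succ_succ]
        push_cast
        rw [pow_succ]
        ring
    · intro x hx
      rw [tfun]
      have h1 : tfun n (x + 1) = 0 := by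
        apply hzero
        intro j hj hne
        exact hx (j + 1) (by omega) (by push_cast at hne ⊢; omega)
      have h2 : tfun n (x - 1) = 0 := by
        apply hzero
        intro j hj hne
        exact hx j (by omega) (by push_cast at hne ⊢; omega)
      rw [h1, h2]
      ring
/-- For the nucleus `ρ_σ` concentrated at the origin with value `|Z_σ⟩⟨Z_σ|` and its
evolution `ρ⁽ⁿ⁺¹⁾ = 𝔍_n ρ⁽ⁿ⁾`, one has for `n ≥ 1`: `Tr[ρ⁽ⁿ⁾(x)] = 2⁻ⁿ C(n,j)` if
`x = n - 2j` with `0 ≤ j ≤ n`, and `Tr[ρ⁽ⁿ⁾(x)] = 0` otherwise. -/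

theorem stmt14 (a : ℕ → ℋ →L[ℂ] ℋ) (ha : QBN a) (σ : Finset ℕ) (n : ℕ) (hn : 1 ≤ n) :
    (∀ j : ℕ, j ≤ n →
      trH (seqJ a (rhoPoint σ) n ((n : ℤ) - 2 * (j : ℤ))) = (n.choose j : ℝ) / 2 ^ n) ∧
    (∀ x : ℤ, (∀ j : ℕ, j ≤ n → x ≠ (n : ℤ) - 2 * (j : ℤ)) →
      trH (seqJ a (rhoPoint σ) n x) = 0) := by
  constructor
  · intro j hj
    rw [(main_ind ha σ n _).2, (tfun_spec n).1 j hj]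
  · intro x hx
    rw [(main_ind ha σ n x).2]
    exact (tfun_spec n).2 x hx
end
end
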